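/- (Convergence from below.) For every state s of the stochastic game and every direction d in Dir, L_inf(s)[d] = Ach(s)[d], where L_inf(s) is the union of the MO-BVI lower iterates L_i(s). -/

import Mathlib

open scoped Classical Pointwise

noncomputable section

/-- Vectors in `ℝ^n`. -/
abbrev Vec (n : ℕ) := Fin n → ℝ

/-- Downward closure within the nonnegative orthant. -/
def dwc {n : ℕ} (X : Set (Vec n)) : Set (Vec n) :=
  {y | (∀ i, 0 ≤ y i) ∧ ∃ x ∈ X, ∀ i, y i ≤ x i}

/-- The unit cube `[0,1]^n`. -/
def unitCube (n : ℕ) : Set (Vec n) := {v | ∀ i, 0 ≤ v i ∧ v i ≤ 1}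

/-- `Box1 = dwc({(1,...,1)})`. -/
def Box1 (n : ℕ) : Set (Vec n) := dwc {fun _ => 1}

/-- Euclidean norm on `ℝ^n`. -/
def euclNorm {n : ℕ} (x : Vec n) : ℝ := Real.sqrt (∑ i, x i ^ 2)

/-- The direction (projective ray) `[v]` of a vector `v`. -/
def dirOf {n : ℕ} (v : Vec n) : Set (Vec n) := {w | ∃ l : ℝ, 0 < l ∧ w = l • v}

/-- The set of all directions in the nonnegative orthant. -/
def Dir (n : ℕ) : Set (Set (Vec n)) :=
  {D | ∃ v : Vec n, v ≠ 0 ∧ (∀ i, 0 ≤ v i) ∧ D = dirOf v}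

/-- `X` evaluated in direction `D`:  `X[D] = sup { ‖x‖ : x ∈ X, [x] = D }`
(the supremum of the empty set of reals is `0`). -/
def evalIn {n : ℕ} (X : Set (Vec n)) (D : Set (Vec n)) : ℝ :=
  sSup (euclNorm '' {x | x ∈ X ∧ dirOf x = D})

/-- A finite turn-based two-player stochastic game.  `isMax s` holds for
Maximizer (`S_Box`) states; the remaining states belong to Minimizer (`S_Circ`). -/
structure SG (S A : Type) [Fintype S] [Fintype A] where
  isMax : S → Prop
  s0 : S
  Av : S → Finset A
  av_nonempty : ∀ s, (Av s).Nonempty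
  δ : S → A → S → ℝ
  δ_nonneg : ∀ s a s', 0 ≤ δ s a s'
  δ_sum : ∀ s a, a ∈ Av s → ∑ s' : S, δ s a s' = 1

variable {S A : Type} [Fintype S] [Fintype A] {n : ℕ}

/-- Indicator vector `Ind(s)` of the generalized-reachability objective. -/
def indVec (Tgt : Fin n → Set S) (s : S) : Vec n := fun i => if s ∈ Tgt i then 1 else 0

/-- The state-action set `f(s,a) = (dwc({Ind(s)}) + Σ_{s'} δ(s,a)(s') · f(s')) ∩ Box1`. -/
def SA (G : SG S A) (Tgt : Fin n → Set S) (f : S → Set (Vec n)) (s : S) (a : A) :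
    Set (Vec n) :=
  (dwc {indVec Tgt s} + ∑ s' : S, G.δ s a s' • f s') ∩ Box1 n

/-- The multi-dimensional Bellman operator. -/
def Bop (G : SG S A) (Tgt : Fin n → Set S) (f : S → Set (Vec n)) : S → Set (Vec n) :=
  fun s =>
    if G.isMax s then convexHull ℝ (⋃ a ∈ G.Av s, SA G Tgt f s a)
    else ⋂ a ∈ G.Av s, SA G Tgt f s a

/-- `(s,a)` is an exit of `X` if with positive probability a successor outside `X`
is chosen. -/
def IsExit (G : SG S A) (X : Set S) (s : S) (a : A) : Prop :=
  ∃ t, 0 < G.δ s a t ∧ t ∉ X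

/-- All exits of a set of states. -/
def Exits (G : SG S A) (X : Set S) : Set (S × A) :=
  {p | p.1 ∈ X ∧ p.2 ∈ G.Av p.1 ∧ IsExit G X p.1 p.2}

/-- End component w.r.t. an availability restriction `Av'`. -/
def IsECWith (G : SG S A) (Av' : S → Finset A) (X : Set S) : Prop :=
  X.Nonempty ∧ ∃ B : Finset A, B.Nonempty ∧
    (∀ a ∈ B, ∃ s ∈ X, a ∈ Av' s) ∧
    (∀ s ∈ X, ∀ a ∈ B, a ∈ Av' s → ¬ IsExit G X s a) ∧
    (∀ s ∈ X, ∀ t ∈ X, Relation.ReflTransGen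
      (fun u v => u ∈ X ∧ v ∈ X ∧ ∃ a ∈ B, a ∈ Av' u ∧ 0 < G.δ u a v) s t)

/-- End component of the game. -/
def IsEC (G : SG S A) (X : Set S) : Prop := IsECWith G G.Av X

/-- Maximal end component of the game. -/
def IsMEC (G : SG S A) (X : Set S) : Prop :=
  IsEC G X ∧ ∀ Y, IsEC G Y → X ⊆ Y → Y = X

/-- MEC of the game restricted to the states `T` with available actions `Av'`. -/
def IsMECIn (G : SG S A) (T : Set S) (Av' : S → Finset A) (X : Set S) : Prop :=
  X ⊆ T ∧ IsECWith G Av' X ∧ ∀ Y, Y ⊆ T → IsECWith G Av' Y → X ⊆ Y → Y = X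

/-- The best-exit set `BE_f(T)`. -/
def BE (G : SG S A) (Tgt : Fin n → Set S) (f : S → Set (Vec n)) (T : Set S) :
    Set (Vec n) :=
  (dwc {∑ s : S, if s ∈ T then indVec Tgt s else 0} +
      convexHull ℝ
        (if (Exits G (T ∩ {s | G.isMax s})).Nonempty then
          ⋃ p ∈ Exits G (T ∩ {s | G.isMax s}), SA G Tgt f p.1 p.2
        else {0})) ∩ Box1 n

/-- The minimal value `min_{b ∈ Av(s)} f(s,b)[D]`. -/
def minEval (G : SG S A) (Tgt : Fin n → Set S) (f : S → Set (Vec n)) (s : S)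
    (D : Set (Vec n)) : ℝ :=
  (G.Av s).inf' (G.av_nonempty s) fun b => evalIn (SA G Tgt f s b) D

/-- `argmin_{a ∈ Av(s)} f(s,a)[D]`. -/
def argminSet (G : SG S A) (Tgt : Fin n → Set S) (f : S → Set (Vec n)) (s : S)
    (D : Set (Vec n)) : Finset A :=
  (G.Av s).filter fun a => evalIn (SA G Tgt f s a) D = minEval G Tgt f s D

/-- `R_B`: all directions in which exactly the actions of `B` are optimal
for Minimizer at `s`. -/
def argminRegion (G : SG S A) (Tgt : Fin n → Set S) (f : S → Set (Vec n)) (s : S)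
    (B : Finset A) : Set (Set (Vec n)) :=
  {D ∈ Dir n | argminSet G Tgt f s D = B}

/-- A partition of the set `Dir` of directions into (nonempty) regions. -/
def IsPartitionOfDir (n : ℕ) (P : Set (Set (Set (Vec n)))) : Prop :=
  (∀ R ∈ P, R.Nonempty ∧ R ⊆ Dir n) ∧
  (∀ R1 ∈ P, ∀ R2 ∈ P, R1 ≠ R2 → R1 ∩ R2 = ∅) ∧
  ⋃₀ P = Dir n

/-- A partition of `Dir` into regions that is consistent w.r.t. `T` and `f`. -/
def ConsistentPartition (G : SG S A) (Tgt : Fin n → Set S) (T : Set S)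
    (f : S → Set (Vec n)) (P : Set (Set (Set (Vec n)))) : Prop :=
  IsPartitionOfDir n P ∧
  ∀ R ∈ P, ∀ d1 ∈ R, ∀ d2 ∈ R, ∀ s ∈ T, ¬ G.isMax s → ∀ a ∈ G.Av s,
    (evalIn (SA G Tgt f s a) d1 = minEval G Tgt f s d1 ↔
      evalIn (SA G Tgt f s a) d2 = minEval G Tgt f s d2)

/-- The GET_REGIONS procedure: the common refinement over all Minimizer states of `T`
of their argmin partitions. -/
def getRegions (G : SG S A) (Tgt : Fin n → Set S) (T : Set S) (f : S → Set (Vec n)) :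
    Set (Set (Set (Vec n))) :=
  {R | R.Nonempty ∧ ∃ φ : S → Finset A,
    R = Dir n ∩ ⋂ s ∈ {s ∈ T | ¬ G.isMax s}, argminRegion G Tgt f s (φ s)}

/-- Availability restricted to Minimizer-optimal actions (w.r.t. `f` in direction `D`)
inside `T`. -/
def restrictedAv (G : SG S A) (Tgt : Fin n → Set S) (f : S → Set (Vec n)) (T : Set S)
    (D : Set (Vec n)) : S → Finset A := fun s =>
  if s ∈ T ∧ ¬ G.isMax s then argminSet G Tgt f s D else G.Av s

/-- The FIND_SECs procedure. -/
def findSECs (G : SG S A) (Tgt : Fin n → Set S) (f : S → Set (Vec n)) (T : Set S)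
    (R : Set (Set (Vec n))) : Set (Set S) :=
  {X | ∃ D ∈ R, IsMECIn G T (restrictedAv G Tgt f T D) X}

/-- The point set of a region: `{v ∈ [0,1]^n : v ≠ 0, [v] ∈ R}`. -/
def regionPts (n : ℕ) (R : Set (Set (Vec n))) : Set (Vec n) :=
  {v | v ∈ unitCube n ∧ v ≠ 0 ∧ dirOf v ∈ R}

/-- The DEFLATE_SECs procedure. -/
def deflate (G : SG S A) (Tgt : Fin n → Set S) (L U : S → Set (Vec n)) :
    S → Set (Vec n) := fun s =>
  if ∃ T, IsMEC G T ∧ s ∈ T then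
    ⋃ T ∈ {T | IsMEC G T ∧ s ∈ T}, ⋃ R ∈ getRegions G Tgt T L,
      if ∃ C ∈ findSECs G Tgt L T R, s ∈ C then
        ⋃ C ∈ {C | C ∈ findSECs G Tgt L T R ∧ s ∈ C},
          U s ∩ BE G Tgt U C ∩ regionPts n R
      else U s ∩ regionPts n R
  else U s

/-- The MO-BVI iterates: `bvi G Tgt i = (L_i, U_i)`. -/
def bvi (G : SG S A) (Tgt : Fin n → Set S) : ℕ → (S → Set (Vec n)) × (S → Set (Vec n))
  | 0 => (fun _ => {0}, fun _ => Box1 n)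
  | i + 1 =>
    (Bop G Tgt (bvi G Tgt i).1,
      deflate G Tgt (Bop G Tgt (bvi G Tgt i).1) (Bop G Tgt (bvi G Tgt i).2))

/-- `L_inf`. -/
def Llim (G : SG S A) (Tgt : Fin n → Set S) : S → Set (Vec n) :=
  fun s => ⋃ i : ℕ, (bvi G Tgt i).1 s

/-- `U_inf`. -/
def Ulim (G : SG S A) (Tgt : Fin n → Set S) : S → Set (Vec n) :=
  fun s => ⋂ i : ℕ, (bvi G Tgt i).2 s

/-- A (total, history-dependent, randomizing) strategy. -/
structure Strategy (G : SG S A) where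
  choice : List (S × A) → S → A → ℝ
  nonneg : ∀ h s a, 0 ≤ choice h s a
  supp : ∀ h s a, a ∉ G.Av s → choice h s a = 0
  sum_one : ∀ h s, ∑ a ∈ G.Av s, choice h s a = 1

/-- Probability of reaching `T` within `k` steps under the Maximizer strategy `σ`
and Minimizer strategy `τ`, from state `s` after history `h`. -/
def reachBy (G : SG S A) (σ τ : Strategy G) (T : Set S) :
    ℕ → List (S × A) → S → ℝ
  | 0, _, s => if s ∈ T then 1 else 0
  | k + 1, h, s =>
    if s ∈ T then 1
    else ∑ a ∈ G.Av s,
      (if G.isMax s then σ.choice h s a else τ.choice h s a) *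
        ∑ s' : S, G.δ s a s' * reachBy G σ τ T k (h ++ [(s, a)]) s'

/-- Probability of the event `◇T` in the Markov chain induced by `(σ,τ)` from `s`. -/
def probReach (G : SG S A) (σ τ : Strategy G) (s : S) (T : Set S) : ℝ :=
  ⨆ k : ℕ, reachBy G σ τ T k [] s

/-- The set `Ach(s)` of achievable vectors from `s`. -/
def Ach (G : SG S A) (Tgt : Fin n → Set S) (s : S) : Set (Vec n) :=
  {v | v ∈ unitCube n ∧ ∃ σ : Strategy G, ∀ τ : Strategy G, ∀ i : Fin n,
    v i ≤ probReach G σ τ s (Tgt i)}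

/-- A regional simple end component for region `R`. -/
def IsRegionalSEC (G : SG S A) (Tgt : Fin n → Set S) (T' : Set S)
    (R : Set (Set (Vec n))) : Prop :=
  IsEC G T' ∧ ∀ D ∈ R, ∀ s ∈ T',
    evalIn (Ach G Tgt s) D = evalIn (BE G Tgt (Ach G Tgt) T') D

/-- The common refinement of two partitions of `Dir`. -/
def commonRefinement (n : ℕ) (P1 P2 : Set (Set (Set (Vec n)))) :
    Set (Set (Set (Vec n))) :=
  {R | R.Nonempty ∧ ∃ R1 ∈ P1, ∃ R2 ∈ P2, R = R1 ∩ R2}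


/-! ### Auxiliary development -/

section AuxProof

variable {S A : Type} [Fintype S] [Fintype A] {n : ℕ}

lemma mem_Box1 {x : Vec n} : x ∈ Box1 n ↔ ∀ i, 0 ≤ x i ∧ x i ≤ 1 := by
  constructor
  · rintro ⟨h0, y, hy, hle⟩ i
    rw [Set.mem_singleton_iff] at hy
    subst hy
    exact ⟨h0 i, hle i⟩
  · intro h; exact ⟨fun i => (h i).1, fun _ => 1, rfl, fun i => (h i).2⟩

lemma Box1_eq_unitCube : Box1 n = unitCube n := by
  ext x; rw [mem_Box1]; rfl

lemma convex_Box1 : Convex ℝ (Box1 n) := by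
  intro x hx y hy a b ha hb hab
  rw [mem_Box1] at hx hy ⊢
  intro i
  have hxi := hx i; have hyi := hy i
  constructor
  · have : (a • x + b • y) i = a * x i + b * y i := by
      simp [Pi.add_apply, Pi.smul_apply, smul_eq_mul]
    rw [this]; exact add_nonneg (mul_nonneg ha hxi.1) (mul_nonneg hb hyi.1)
  · have : (a • x + b • y) i = a * x i + b * y i := by
      simp [Pi.add_apply, Pi.smul_apply, smul_eq_mul]
    rw [this]
    calc a * x i + b * y i ≤ a * 1 + b * 1 := by
          gcongr; exact hxi.2; exact hyi.2
      _ = 1 := by rw [mul_one, mul_one, hab]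

/-- Downward-closed set (within the nonnegative orthant). -/
def DC (X : Set (Vec n)) : Prop :=
  ∀ x ∈ X, ∀ y : Vec n, (∀ i, 0 ≤ y i) → (∀ i, y i ≤ x i) → y ∈ X

lemma DC_zero : DC ({0} : Set (Vec n)) := by
  rintro x hx y hy hle
  rw [Set.mem_singleton_iff] at hx ⊢
  subst hx
  funext i
  exact le_antisymm (hle i) (hy i)

lemma zero_mem_Box1 : (0 : Vec n) ∈ Box1 n := by
  rw [mem_Box1]; intro i; simp

/-- membership in a finite (pointwise) sum of sets -/
lemma mem_finsetSum {ι : Type*} [DecidableEq ι] {t : Finset ι} {F : ι → Set (Vec n)} {x : Vec n} :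
    x ∈ (∑ i ∈ t, F i) ↔ ∃ y : ι → Vec n, (∀ i ∈ t, y i ∈ F i) ∧ x = ∑ i ∈ t, y i := by
  classical
  induction t using Finset.induction_on generalizing x with
  | empty =>
    simp only [Finset.sum_empty]
    constructor
    · intro hx
      refine ⟨fun _ => 0, by simp, ?_⟩
      simpa using hx
    · rintro ⟨y, -, rfl⟩; simp [Set.mem_zero]
  | @insert a s hni ih =>
    rw [Finset.sum_insert hni]
    constructor
    · intro hx
      rcases Set.mem_add.mp hx with ⟨u, hu, v, hv, huv⟩
      rcases ih.mp hv with ⟨y, hy, rfl⟩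
      refine ⟨Function.update y a u, ?_, ?_⟩
      · intro i hi
        rcases Finset.mem_insert.mp hi with rfl | hi2
        · simpa using hu
        · have hne : i ≠ a := by rintro rfl; exact hni hi2
          rw [Function.update_of_ne hne]
          exact hy i hi2
      · rw [Finset.sum_insert hni, Function.update_self, ← huv]
        congr 1
        apply Finset.sum_congr rfl
        intro i hi
        have hne : i ≠ a := by rintro rfl; exact hni hi
        rw [Function.update_of_ne hne]
    · rintro ⟨y, hy, rfl⟩
      rw [Finset.sum_insert hni]
      exact Set.mem_add.mpr ⟨y a, hy a (Finset.mem_insert_self a s),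
        ∑ i ∈ s, y i, ih.mpr ⟨y, fun i hi => hy i (Finset.mem_insert_of_mem hi), rfl⟩, rfl⟩

end AuxProof

section AuxProof2
set_option linter.unusedSectionVars false

variable {S A : Type} [Fintype S] [Fintype A] {n : ℕ}

lemma indVec_nonneg (Tgt : Fin n → Set S) (s : S) (i : Fin n) : 0 ≤ indVec Tgt s i := by
  unfold indVec; split <;> norm_num

lemma indVec_le_one (Tgt : Fin n → Set S) (s : S) (i : Fin n) : indVec Tgt s i ≤ 1 := by
  unfold indVec; split <;> norm_num

lemma SA_subset_Box1 (G : SG S A) (Tgt : Fin n → Set S) (f : S → Set (Vec n)) (s : S) (a : A) :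
    SA G Tgt f s a ⊆ Box1 n := Set.inter_subset_right

lemma mem_SA_elim {G : SG S A} {Tgt : Fin n → Set S} {f : S → Set (Vec n)} {s : S} {a : A}
    {z : Vec n} (hz : z ∈ SA G Tgt f s a) :
    z ∈ Box1 n ∧ ∃ y : S → Vec n, (∀ s', y s' ∈ f s') ∧
      ∀ i, z i ≤ indVec Tgt s i + ∑ s' : S, G.δ s a s' * y s' i := by
  classical
  obtain ⟨hz1, hz2⟩ := hz
  refine ⟨hz2, ?_⟩
  rcases Set.mem_add.mp hz1 with ⟨d, hd, m, hm, hdm⟩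
  rcases mem_finsetSum.mp hm with ⟨w, hw, rfl⟩
  choose y hy hyw using fun s' => Set.mem_smul_set.mp (hw s' (Finset.mem_univ s'))
  refine ⟨y, hy, ?_⟩
  intro i
  obtain ⟨hd0, e, he, hdle⟩ := hd
  rw [Set.mem_singleton_iff] at he; subst he
  have hzi : z i = d i + ∑ s' : S, w s' i := by
    rw [← hdm]; simp [Finset.sum_apply]
  rw [hzi]
  have hsum : ∀ s', w s' i = G.δ s a s' * y s' i := by
    intro s'
    rw [← hyw s']
    simp [Pi.smul_apply, smul_eq_mul]
  calc d i + ∑ s' : S, w s' i ≤ indVec Tgt s i + ∑ s' : S, w s' i := by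
        gcongr; exact hdle i
    _ = indVec Tgt s i + ∑ s' : S, G.δ s a s' * y s' i := by
        congr 1; exact Finset.sum_congr rfl fun s' _ => hsum s'

lemma mem_SA_intro {G : SG S A} {Tgt : Fin n → Set S} {f : S → Set (Vec n)} {s : S} {a : A}
    {z : Vec n} {y : S → Vec n}
    (hDC : ∀ s', DC (f s')) (hsub : ∀ s', f s' ⊆ Box1 n)
    (hy : ∀ s', y s' ∈ f s')
    (hz1 : z ∈ Box1 n)
    (hz2 : ∀ i, z i ≤ indVec Tgt s i + ∑ s' : S, G.δ s a s' * y s' i) :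
    z ∈ SA G Tgt f s a := by
  classical
  refine ⟨?_, hz1⟩
  set m : Vec n := fun i => ∑ s' : S, G.δ s a s' * y s' i with hm
  have hy0 : ∀ s' i, 0 ≤ y s' i := fun s' i => ((mem_Box1.mp (hsub s' (hy s'))) i).1
  have hm0 : ∀ i, 0 ≤ m i := fun i =>
    Finset.sum_nonneg fun s' _ => mul_nonneg (G.δ_nonneg s a s') (hy0 s' i)
  have hz0 : ∀ i, 0 ≤ z i := fun i => ((mem_Box1.mp hz1) i).1
  set t : Vec n := fun i => if m i = 0 then 0 else min (z i) (m i) / m i with ht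
  have ht01 : ∀ i, 0 ≤ t i ∧ t i ≤ 1 := by
    intro i
    rw [ht]
    dsimp only
    split
    · norm_num
    · rename_i hmi
      have hmpos : 0 < m i := lt_of_le_of_ne (hm0 i) (Ne.symm hmi)
      constructor
      · exact div_nonneg (le_min (hz0 i) (hm0 i)) (hm0 i)
      · rw [div_le_one hmpos]; exact min_le_right _ _
  set y' : S → Vec n := fun s' i => t i * y s' i with hy'
  have hy'mem : ∀ s', y' s' ∈ f s' := by
    intro s'
    refine hDC s' (y s') (hy s') (y' s') (fun i => mul_nonneg (ht01 i).1 (hy0 s' i)) ?_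
    intro i
    calc t i * y s' i ≤ 1 * y s' i := mul_le_mul_of_nonneg_right (ht01 i).2 (hy0 s' i)
      _ = y s' i := one_mul _
  have hsum_y' : ∀ i, (∑ s' : S, G.δ s a s' * y' s' i) = min (z i) (m i) := by
    intro i
    have : (∑ s' : S, G.δ s a s' * y' s' i) = t i * m i := by
      rw [hm, Finset.mul_sum]
      exact Finset.sum_congr rfl fun s' _ => by rw [hy']; ring
    rw [this, ht]
    dsimp only
    split
    · rename_i hmi
      have hle : m i ≤ z i := by rw [hmi]; exact hz0 i
      rw [min_eq_right hle, hmi, mul_zero]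
    · rename_i hmi
      rw [div_mul_cancel₀ _ hmi]
  -- decomposition z = d + m' with d ∈ dwc {Ind}, m' = ∑ δ • y'
  refine Set.mem_add.mpr ⟨fun i => z i - min (z i) (m i), ?_, fun i => min (z i) (m i), ?_, ?_⟩
  · constructor
    · intro i
      show 0 ≤ z i - min (z i) (m i)
      simp only [sub_nonneg]; exact min_le_left _ _
    · refine ⟨indVec Tgt s, rfl, ?_⟩
      intro i
      show z i - min (z i) (m i) ≤ indVec Tgt s i
      rcases le_or_gt (z i) (m i) with h | h
      · rw [min_eq_left h]; simp [indVec_nonneg Tgt s i]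
      · rw [min_eq_right h.le]
        have := hz2 i
        linarith
  · rw [mem_finsetSum]
    refine ⟨fun s' => G.δ s a s' • y' s', fun s' _ => Set.smul_mem_smul_set (hy'mem s'), ?_⟩
    funext i
    rw [Finset.sum_apply, ← hsum_y' i]
    exact Finset.sum_congr rfl fun s' _ => by simp [Pi.smul_apply, smul_eq_mul]
  · funext i; simp

lemma zero_mem_SA {G : SG S A} {Tgt : Fin n → Set S} {f : S → Set (Vec n)} {s : S} {a : A}
    (hDC : ∀ s', DC (f s')) (hsub : ∀ s', f s' ⊆ Box1 n) (h0 : ∀ s', (0 : Vec n) ∈ f s') :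
    (0 : Vec n) ∈ SA G Tgt f s a := by
  refine mem_SA_intro hDC hsub h0 zero_mem_Box1 ?_
  intro i
  have : ∀ s' : S, G.δ s a s' * (0 : Vec n) i = 0 := fun s' => by simp
  rw [Finset.sum_congr rfl fun s' _ => this s']
  simp [indVec_nonneg Tgt s i]

lemma DC_SA {G : SG S A} {Tgt : Fin n → Set S} {f : S → Set (Vec n)} {s : S} {a : A}
    (hDC : ∀ s', DC (f s')) (hsub : ∀ s', f s' ⊆ Box1 n) :
    DC (SA G Tgt f s a) := by
  intro z hz z' hz'0 hz'le
  obtain ⟨hzB, y, hy, hzle⟩ := mem_SA_elim hz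
  have hz'B : z' ∈ Box1 n := by
    rw [mem_Box1]
    exact fun i => ⟨hz'0 i, le_trans (hz'le i) ((mem_Box1.mp hzB i).2)⟩
  exact mem_SA_intro hDC hsub hy hz'B fun i => le_trans (hz'le i) (hzle i)

end AuxProof2

section AuxProof3
set_option linter.unusedSectionVars false

variable {S A : Type} [Fintype S] [Fintype A] {n : ℕ}

lemma mem_Bop_min {G : SG S A} {Tgt : Fin n → Set S} {f : S → Set (Vec n)} {s : S}
    (h : ¬ G.isMax s) {z : Vec n} :
    z ∈ Bop G Tgt f s ↔ ∀ a ∈ G.Av s, z ∈ SA G Tgt f s a := by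
  simp [Bop, h, Set.mem_iInter]

lemma mem_Bop_max {G : SG S A} {Tgt : Fin n → Set S} {f : S → Set (Vec n)} {s : S}
    (h : G.isMax s) {z : Vec n} :
    z ∈ Bop G Tgt f s ↔ z ∈ convexHull ℝ (⋃ a ∈ G.Av s, SA G Tgt f s a) := by
  simp [Bop, h]

lemma Bop_subset_Box1 {G : SG S A} {Tgt : Fin n → Set S} {f : S → Set (Vec n)} {s : S} :
    Bop G Tgt f s ⊆ Box1 n := by
  unfold Bop; split
  · exact convexHull_min (Set.iUnion₂_subset fun a _ => SA_subset_Box1 G Tgt f s a) convex_Box1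
  · obtain ⟨a, ha⟩ := G.av_nonempty s
    intro z hz
    exact SA_subset_Box1 G Tgt f s a (Set.mem_iInter₂.mp hz a ha)

lemma DC_convexHull {X : Set (Vec n)} (hX : DC X) (hpos : ∀ x ∈ X, ∀ i, 0 ≤ x i) :
    DC (convexHull ℝ X) := by
  classical
  intro x hx y hy0 hyle
  rw [convexHull_eq] at hx
  obtain ⟨ι, tf, w, zf, hw0, hw1, hzmem, hcm⟩ := hx
  have hxe : ∀ i, x i = ∑ j ∈ tf, w j * zf j i := by
    intro i
    rw [← hcm, Finset.centerMass_eq_of_sum_1 _ _ hw1, Finset.sum_apply]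
    exact Finset.sum_congr rfl fun j _ => by simp [Pi.smul_apply, smul_eq_mul]
  have hx0 : ∀ i, 0 ≤ x i := by
    intro i
    rw [hxe i]
    exact Finset.sum_nonneg fun j hj => mul_nonneg (hw0 j hj) (hpos _ (hzmem j hj) i)
  set τ : Fin n → ℝ := fun i => if x i = 0 then 0 else y i / x i with hτ
  have hτ01 : ∀ i, 0 ≤ τ i ∧ τ i ≤ 1 := by
    intro i
    rw [hτ]; dsimp only; split
    · norm_num
    · rename_i hxi
      have hxpos : 0 < x i := lt_of_le_of_ne (hx0 i) (Ne.symm hxi)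
      exact ⟨div_nonneg (hy0 i) (hx0 i), by rw [div_le_one hxpos]; exact hyle i⟩
  set zf' : ι → Vec n := fun j i => τ i * zf j i with hzf'
  have hzf'mem : ∀ j ∈ tf, zf' j ∈ X := by
    intro j hj
    refine hX (zf j) (hzmem j hj) (zf' j)
      (fun i => mul_nonneg (hτ01 i).1 (hpos _ (hzmem j hj) i)) ?_
    intro i
    calc τ i * zf j i ≤ 1 * zf j i :=
        mul_le_mul_of_nonneg_right (hτ01 i).2 (hpos _ (hzmem j hj) i)
      _ = zf j i := one_mul _
  have hsum : tf.centerMass w zf' = y := by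
    rw [Finset.centerMass_eq_of_sum_1 _ _ hw1]
    funext i
    rw [Finset.sum_apply]
    have : ∑ j ∈ tf, (w j • zf' j) i = τ i * ∑ j ∈ tf, w j * zf j i := by
      rw [Finset.mul_sum]
      exact Finset.sum_congr rfl fun j _ => by simp [Pi.smul_apply, smul_eq_mul, hzf']; ring
    rw [this, ← hxe i, hτ]
    dsimp only
    split
    · rename_i hxi
      have h1 : y i ≤ 0 := hxi ▸ hyle i
      have := hy0 i
      simp only [zero_mul]
      linarith
    · rename_i hxi
      field_simp
  rw [← hsum]
  exact Finset.centerMass_mem_convexHull tf hw0 (by rw [hw1]; norm_num) hzf'mem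

lemma sum_sets_mono {F G' : S → Set (Vec n)} (h : ∀ s', F s' ⊆ G' s') {c : S → ℝ} :
    (∑ s' : S, c s' • F s') ⊆ ∑ s' : S, c s' • G' s' := by
  classical
  intro x hx
  rcases mem_finsetSum.mp hx with ⟨y, hy, rfl⟩
  exact mem_finsetSum.mpr ⟨y, fun s' hs' => Set.smul_set_mono (h s') (hy s' hs'), rfl⟩

lemma SA_mono {G : SG S A} {Tgt : Fin n → Set S} {f g : S → Set (Vec n)}
    (h : ∀ s', f s' ⊆ g s') (s : S) (a : A) : SA G Tgt f s a ⊆ SA G Tgt g s a :=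
  Set.inter_subset_inter (Set.add_subset_add Set.Subset.rfl (sum_sets_mono h)) Set.Subset.rfl

lemma Bop_mono {G : SG S A} {Tgt : Fin n → Set S} {f g : S → Set (Vec n)}
    (h : ∀ s', f s' ⊆ g s') (s : S) : Bop G Tgt f s ⊆ Bop G Tgt g s := by
  unfold Bop; split
  · exact convexHull_mono (Set.iUnion₂_mono fun a _ => SA_mono h s a)
  · exact Set.iInter₂_mono fun a _ => SA_mono h s a

/-- All structural properties of the lower iterates. -/
lemma L_props (G : SG S A) (Tgt : Fin n → Set S) (k : ℕ) (s : S) :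
    ((bvi G Tgt k).1 s ⊆ Box1 n) ∧ DC ((bvi G Tgt k).1 s) ∧ (0 : Vec n) ∈ (bvi G Tgt k).1 s := by
  induction k generalizing s with
  | zero =>
    have he : (bvi G Tgt 0).1 s = ({0} : Set (Vec n)) := rfl
    rw [he]
    refine ⟨?_, DC_zero, rfl⟩
    intro x hx
    rw [Set.mem_singleton_iff] at hx
    subst hx
    exact zero_mem_Box1
  | succ k ih =>
    have hsub : ∀ s', (bvi G Tgt k).1 s' ⊆ Box1 n := fun s' => (ih s').1
    have hDC : ∀ s', DC ((bvi G Tgt k).1 s') := fun s' => (ih s').2.1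
    have h0 : ∀ s', (0 : Vec n) ∈ (bvi G Tgt k).1 s' := fun s' => (ih s').2.2
    have hL : (bvi G Tgt (k+1)).1 = Bop G Tgt (bvi G Tgt k).1 := rfl
    rw [hL]
    refine ⟨Bop_subset_Box1, ?_, ?_⟩
    · by_cases hmax : G.isMax s
      · intro z hz z' h1 h2
        rw [mem_Bop_max hmax] at hz ⊢
        have hDCU : DC (⋃ a ∈ G.Av s, SA G Tgt (bvi G Tgt k).1 s a) := by
          intro x hx y hy0 hyle
          rcases Set.mem_iUnion₂.mp hx with ⟨a, ha, hxa⟩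
          exact Set.mem_iUnion₂.mpr ⟨a, ha, DC_SA hDC hsub x hxa y hy0 hyle⟩
        have hposU : ∀ x ∈ (⋃ a ∈ G.Av s, SA G Tgt (bvi G Tgt k).1 s a), ∀ i, 0 ≤ x i := by
          intro x hx i
          rcases Set.mem_iUnion₂.mp hx with ⟨a, ha, hxa⟩
          exact (mem_Box1.mp (SA_subset_Box1 G Tgt _ s a hxa) i).1
        exact DC_convexHull hDCU hposU z hz z' h1 h2
      · intro z hz z' h1 h2
        rw [mem_Bop_min hmax] at hz ⊢
        exact fun a ha => DC_SA hDC hsub z (hz a ha) z' h1 h2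
    · by_cases hmax : G.isMax s
      · rw [mem_Bop_max hmax]
        obtain ⟨a, ha⟩ := G.av_nonempty s
        exact subset_convexHull ℝ _ (Set.mem_iUnion₂.mpr ⟨a, ha, zero_mem_SA hDC hsub h0⟩)
      · rw [mem_Bop_min hmax]
        exact fun a _ => zero_mem_SA hDC hsub h0

end AuxProof3

section AuxProof4
set_option linter.unusedSectionVars false

variable {S A : Type} [Fintype S] [Fintype A] {n : ℕ}

/-- default (Dirac) action distribution -/
def diracChoice (G : SG S A) (t : S) : A → ℝ :=
  fun a => if a = (G.av_nonempty t).choose then 1 else 0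

lemma diracChoice_nonneg (G : SG S A) (t : S) (a : A) : 0 ≤ diracChoice G t a := by
  unfold diracChoice; split <;> norm_num

lemma diracChoice_supp (G : SG S A) (t : S) (a : A) (ha : a ∉ G.Av t) :
    diracChoice G t a = 0 := by
  unfold diracChoice
  split
  · rename_i h
    exact absurd (h ▸ (G.av_nonempty t).choose_spec) ha
  · rfl

lemma diracChoice_sum (G : SG S A) (t : S) : ∑ a ∈ G.Av t, diracChoice G t a = 1 := by
  unfold diracChoice
  rw [Finset.sum_ite_eq' (G.Av t) ((G.av_nonempty t).choose) (fun _ => 1)]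
  rw [if_pos (G.av_nonempty t).choose_spec]

/-- a default strategy -/
def dfltStrat (G : SG S A) : Strategy G where
  choice _ t := diracChoice G t
  nonneg _ t a := diracChoice_nonneg G t a
  supp _ t a ha := diracChoice_supp G t a ha
  sum_one _ t := diracChoice_sum G t

instance (G : SG S A) : Nonempty (Strategy G) := ⟨dfltStrat G⟩

/-- shift a strategy by a history prefix -/
def Strategy.shift {G : SG S A} (σ : Strategy G) (h0 : List (S × A)) : Strategy G where
  choice h := σ.choice (h0 ++ h)
  nonneg h := σ.nonneg (h0 ++ h)
  supp h := σ.supp (h0 ++ h)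
  sum_one h := σ.sum_one (h0 ++ h)

lemma reachBy_nonneg (G : SG S A) (σ τ : Strategy G) (T : Set S) :
    ∀ (k : ℕ) (h : List (S × A)) (s : S), 0 ≤ reachBy G σ τ T k h s
  | 0, h, s => by unfold reachBy; split <;> norm_num
  | (k+1), h, s => by
    unfold reachBy
    split
    · norm_num
    · apply Finset.sum_nonneg
      intro a _
      apply mul_nonneg
      · split
        · exact σ.nonneg _ _ _
        · exact τ.nonneg _ _ _
      · exact Finset.sum_nonneg fun s' _ =>
          mul_nonneg (G.δ_nonneg s a s') (reachBy_nonneg G σ τ T k _ s')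

lemma reachBy_le_one (G : SG S A) (σ τ : Strategy G) (T : Set S) :
    ∀ (k : ℕ) (h : List (S × A)) (s : S), reachBy G σ τ T k h s ≤ 1
  | 0, h, s => by unfold reachBy; split <;> norm_num
  | (k+1), h, s => by
    unfold reachBy
    split
    · norm_num
    · calc ∑ a ∈ G.Av s, (if G.isMax s then σ.choice h s a else τ.choice h s a) *
            ∑ s' : S, G.δ s a s' * reachBy G σ τ T k (h ++ [(s,a)]) s'
          ≤ ∑ a ∈ G.Av s, (if G.isMax s then σ.choice h s a else τ.choice h s a) * 1 := by
            apply Finset.sum_le_sum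
            intro a ha
            apply mul_le_mul_of_nonneg_left
            · calc ∑ s' : S, G.δ s a s' * reachBy G σ τ T k (h ++ [(s,a)]) s'
                  ≤ ∑ s' : S, G.δ s a s' * 1 := by
                    apply Finset.sum_le_sum
                    intro s' _
                    exact mul_le_mul_of_nonneg_left (reachBy_le_one G σ τ T k _ s')
                      (G.δ_nonneg s a s')
                _ = 1 := by
                    simp only [mul_one]
                    exact G.δ_sum s a ha
            · split
              · exact σ.nonneg _ _ _
              · exact τ.nonneg _ _ _
      _ = 1 := by
          simp only [mul_one]
          split
          · exact σ.sum_one h s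
          · exact τ.sum_one h s

lemma reachBy_mono (G : SG S A) (σ τ : Strategy G) (T : Set S) :
    ∀ (k : ℕ) (h : List (S × A)) (s : S),
      reachBy G σ τ T k h s ≤ reachBy G σ τ T (k+1) h s
  | 0, h, s => by
    unfold reachBy
    split
    · norm_num
    · apply Finset.sum_nonneg
      intro a _
      apply mul_nonneg
      · split
        · exact σ.nonneg _ _ _
        · exact τ.nonneg _ _ _
      · exact Finset.sum_nonneg fun s' _ => mul_nonneg (G.δ_nonneg s a s')
          (reachBy_nonneg G σ τ T 0 _ s')
  | (k+1), h, s => by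
    rw [show reachBy G σ τ T (k+1) h s = if s ∈ T then (1:ℝ) else ∑ a ∈ G.Av s,
          (if G.isMax s then σ.choice h s a else τ.choice h s a) *
          ∑ s' : S, G.δ s a s' * reachBy G σ τ T k (h ++ [(s,a)]) s' from rfl,
        show reachBy G σ τ T (k+1+1) h s = if s ∈ T then (1:ℝ) else ∑ a ∈ G.Av s,
          (if G.isMax s then σ.choice h s a else τ.choice h s a) *
          ∑ s' : S, G.δ s a s' * reachBy G σ τ T (k+1) (h ++ [(s,a)]) s' from rfl]
    split
    · norm_num
    · apply Finset.sum_le_sum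
      intro a _
      apply mul_le_mul_of_nonneg_left
      · apply Finset.sum_le_sum
        intro s' _
        exact mul_le_mul_of_nonneg_left (reachBy_mono G σ τ T k _ s') (G.δ_nonneg s a s')
      · split
        · exact σ.nonneg _ _ _
        · exact τ.nonneg _ _ _

lemma reachBy_monotone (G : SG S A) (σ τ : Strategy G) (T : Set S) (h : List (S × A)) (s : S) :
    Monotone (fun k => reachBy G σ τ T k h s) :=
  monotone_nat_of_le_succ fun k => reachBy_mono G σ τ T k h s

lemma bddAbove_reach (G : SG S A) (σ τ : Strategy G) (T : Set S) (h : List (S × A)) (s : S) :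
    BddAbove (Set.range fun k => reachBy G σ τ T k h s) :=
  ⟨1, by rintro x ⟨k, rfl⟩; exact reachBy_le_one G σ τ T k h s⟩

lemma reachBy_le_probReach (G : SG S A) (σ τ : Strategy G) (T : Set S) (k : ℕ) (s : S) :
    reachBy G σ τ T k [] s ≤ probReach G σ τ s T :=
  le_ciSup (bddAbove_reach G σ τ T [] s) k

lemma probReach_nonneg (G : SG S A) (σ τ : Strategy G) (s : S) (T : Set S) :
    0 ≤ probReach G σ τ s T :=
  le_trans (reachBy_nonneg G σ τ T 0 [] s) (reachBy_le_probReach G σ τ T 0 s)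

lemma probReach_le_one (G : SG S A) (σ τ : Strategy G) (s : S) (T : Set S) :
    probReach G σ τ s T ≤ 1 :=
  ciSup_le fun k => reachBy_le_one G σ τ T k [] s

lemma reachBy_shift (G : SG S A) (σ τ : Strategy G) (T : Set S) (h0 : List (S × A)) :
    ∀ (k : ℕ) (h : List (S × A)) (s : S),
      reachBy G σ τ T k (h0 ++ h) s = reachBy G (σ.shift h0) (τ.shift h0) T k h s
  | 0, h, s => rfl
  | (k+1), h, s => by
    show (if s ∈ T then (1:ℝ) else _) = (if s ∈ T then (1:ℝ) else _)
    split
    · rfl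
    · apply Finset.sum_congr rfl
      intro a _
      congr 1
      apply Finset.sum_congr rfl
      intro s' _
      congr 1
      rw [show h0 ++ h ++ [(s,a)] = h0 ++ (h ++ [(s,a)]) from by rw [List.append_assoc]]
      exact reachBy_shift G σ τ T h0 k (h ++ [(s,a)]) s'

lemma reachBy_congr (G : SG S A) (σ₁ σ₂ τ₁ τ₂ : Strategy G) (T : Set S) :
    ∀ (k : ℕ) (h : List (S × A)) (s : S),
    (∀ (rest : List (S × A)) (t : S) (a : A), (rest = [] → t = s) →
      (∀ q l, rest = q :: l → q.1 = s) →
      σ₁.choice (h ++ rest) t a = σ₂.choice (h ++ rest) t a ∧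
      τ₁.choice (h ++ rest) t a = τ₂.choice (h ++ rest) t a) →
    reachBy G σ₁ τ₁ T k h s = reachBy G σ₂ τ₂ T k h s
  | 0, h, s, _ => rfl
  | (k+1), h, s, H => by
    show (if s ∈ T then (1:ℝ) else _) = (if s ∈ T then (1:ℝ) else _)
    split
    · rfl
    · apply Finset.sum_congr rfl
      intro a _
      have Hroot := H [] s a (fun _ => rfl) (by intro q l hql; cases hql)
      rw [List.append_nil] at Hroot
      congr 1
      · rw [Hroot.1, Hroot.2]
      · apply Finset.sum_congr rfl
        intro s' _
        congr 1
        apply reachBy_congr G σ₁ σ₂ τ₁ τ₂ T k (h ++ [(s,a)]) s'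
        intro rest t b _ _
        have key := H ((s,a) :: rest) t b (by intro hx; cases hx)
          (by intro q l hql; injection hql with h1 _; rw [← h1])
        rw [show h ++ [(s,a)] ++ rest = h ++ ((s,a) :: rest) from by
          rw [List.append_assoc]; rfl] at *
        exact key

/-- the head-state of a continuation -/
def headSt : List (S × A) → S → S
  | [], t => t
  | q :: _, _ => q.1

/-- glue a root distribution at state `s` with continuation strategies -/
def glue (G : SG S A) (s : S) (p : A → ℝ) (hp1 : ∀ a, 0 ≤ p a)
    (hp2 : ∀ a, a ∉ G.Av s → p a = 0) (hp3 : ∑ a ∈ G.Av s, p a = 1)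
    (cont : A → S → Strategy G) : Strategy G where
  choice h t a :=
    match h with
    | [] => if t = s then p a else diracChoice G t a
    | q :: rest => (cont q.2 (headSt rest t)).choice rest t a
  nonneg h t a := by
    cases h with
    | nil =>
      dsimp only
      split
      · exact hp1 a
      · exact diracChoice_nonneg G t a
    | cons q rest => exact (cont q.2 (headSt rest t)).nonneg rest t a
  supp h t a ha := by
    cases h with
    | nil =>
      dsimp only
      split
      · rename_i ht; subst ht; exact hp2 a ha
      · exact diracChoice_supp G t a ha
    | cons q rest => exact (cont q.2 (headSt rest t)).supp rest t a ha
  sum_one h t := by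
    cases h with
    | nil =>
      dsimp only
      split
      · rename_i ht; subst ht; exact hp3
      · exact diracChoice_sum G t
    | cons q rest => exact (cont q.2 (headSt rest t)).sum_one rest t

lemma glue_choice_nil {G : SG S A} {s : S} {p : A → ℝ} {hp1 hp2 hp3} {cont : A → S → Strategy G}
    (a : A) : (glue G s p hp1 hp2 hp3 cont).choice [] s a = p a := by
  show (if s = s then p a else _) = p a
  rw [if_pos rfl]

lemma glue_choice_cons {G : SG S A} {s : S} {p : A → ℝ} {hp1 hp2 hp3} {cont : A → S → Strategy G}
    (q : S × A) (rest : List (S × A)) (t : S) (a : A) :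
    (glue G s p hp1 hp2 hp3 cont).choice (q :: rest) t a
      = (cont q.2 (headSt rest t)).choice rest t a := rfl

/-- computation of `reachBy` for a glued strategy on the left (Maximizer side) -/
lemma reachBy_glue_left (G : SG S A) {T : Set S} {s : S} (hs : s ∉ T)
    (p : A → ℝ) (hp1 : ∀ a, 0 ≤ p a) (hp2 : ∀ a, a ∉ G.Av s → p a = 0)
    (hp3 : ∑ a ∈ G.Av s, p a = 1) (cont : A → S → Strategy G) (τ : Strategy G) (k : ℕ) :
    reachBy G (glue G s p hp1 hp2 hp3 cont) τ T (k+1) [] s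
      = ∑ a ∈ G.Av s, (if G.isMax s then p a else τ.choice [] s a) *
          ∑ s' : S, G.δ s a s' * reachBy G (cont a s') (τ.shift [(s,a)]) T k [] s' := by
  set σg := glue G s p hp1 hp2 hp3 cont with hσg
  rw [show reachBy G σg τ T (k+1) [] s = if s ∈ T then (1:ℝ) else ∑ a ∈ G.Av s,
        (if G.isMax s then σg.choice [] s a else τ.choice [] s a) *
        ∑ s' : S, G.δ s a s' * reachBy G σg τ T k ([] ++ [(s,a)]) s' from rfl,
      if_neg hs]
  apply Finset.sum_congr rfl
  intro a ha
  congr 1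
  · rw [hσg, glue_choice_nil]
  · apply Finset.sum_congr rfl
    intro s' _
    congr 1
    rw [show ([] : List (S × A)) ++ [(s,a)] = [(s,a)] ++ [] from rfl,
      reachBy_shift G σg τ T [(s,a)] k [] s']
    apply reachBy_congr
    intro rest t b h1 h2
    constructor
    · show σg.choice ([(s,a)] ++ ([] ++ rest)) t b = (cont a s').choice ([] ++ rest) t b
      rw [List.nil_append]
      rw [show ([(s,a)] : List (S × A)) ++ rest = (s,a) :: rest from rfl, hσg, glue_choice_cons]
      congr 2
      cases rest with
      | nil => exact (h1 rfl).symm ▸ rfl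
      | cons q l => exact (h2 q l rfl) ▸ rfl
    · rfl

/-- computation of `reachBy` for a glued strategy on the right (Minimizer side) -/
lemma reachBy_glue_right (G : SG S A) {T : Set S} {s : S} (hs : s ∉ T)
    (p : A → ℝ) (hp1 : ∀ a, 0 ≤ p a) (hp2 : ∀ a, a ∉ G.Av s → p a = 0)
    (hp3 : ∑ a ∈ G.Av s, p a = 1) (cont : A → S → Strategy G) (σ : Strategy G) (k : ℕ) :
    reachBy G σ (glue G s p hp1 hp2 hp3 cont) T (k+1) [] s
      = ∑ a ∈ G.Av s, (if G.isMax s then σ.choice [] s a else p a) *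
          ∑ s' : S, G.δ s a s' * reachBy G (σ.shift [(s,a)]) (cont a s') T k [] s' := by
  set τg := glue G s p hp1 hp2 hp3 cont with hτg
  rw [show reachBy G σ τg T (k+1) [] s = if s ∈ T then (1:ℝ) else ∑ a ∈ G.Av s,
        (if G.isMax s then σ.choice [] s a else τg.choice [] s a) *
        ∑ s' : S, G.δ s a s' * reachBy G σ τg T k ([] ++ [(s,a)]) s' from rfl,
      if_neg hs]
  apply Finset.sum_congr rfl
  intro a ha
  congr 1
  · rw [hτg, glue_choice_nil]
  · apply Finset.sum_congr rfl
    intro s' _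
    congr 1
    rw [show ([] : List (S × A)) ++ [(s,a)] = [(s,a)] ++ [] from rfl,
      reachBy_shift G σ τg T [(s,a)] k [] s']
    apply reachBy_congr
    intro rest t b h1 h2
    constructor
    · rfl
    · show τg.choice ([(s,a)] ++ ([] ++ rest)) t b = (cont a s').choice ([] ++ rest) t b
      rw [List.nil_append]
      rw [show ([(s,a)] : List (S × A)) ++ rest = (s,a) :: rest from rfl, hτg, glue_choice_cons]
      congr 2
      cases rest with
      | nil => exact (h1 rfl).symm ▸ rfl
      | cons q l => exact (h2 q l rfl) ▸ rfl

end AuxProof4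

section AuxProof5
set_option linter.unusedSectionVars false

variable {S A : Type} [Fintype S] [Fintype A] {n : ℕ}

lemma iSup_sum_mul {ι : Type*} (t : Finset ι) (c : ι → ℝ) (hc : ∀ i ∈ t, 0 ≤ c i)
    (r : ι → ℕ → ℝ) (hm : ∀ i ∈ t, Monotone (r i)) (hb : ∀ i ∈ t, ∀ k, r i k ≤ 1) :
    ⨆ k : ℕ, ∑ i ∈ t, c i * r i k = ∑ i ∈ t, c i * ⨆ k : ℕ, r i k := by
  have hbdd : ∀ i ∈ t, BddAbove (Set.range (r i)) := fun i hi =>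
    ⟨1, by rintro x ⟨k, rfl⟩; exact hb i hi k⟩
  have htend : Filter.Tendsto (fun k => ∑ i ∈ t, c i * r i k) Filter.atTop
      (nhds (∑ i ∈ t, c i * ⨆ k, r i k)) :=
    tendsto_finset_sum t fun i hi =>
      Filter.Tendsto.const_mul (c i) (tendsto_atTop_ciSup (hm i hi) (hbdd i hi))
  have hgmono : Monotone (fun k => ∑ i ∈ t, c i * r i k) := fun k1 k2 hk =>
    Finset.sum_le_sum fun i hi => mul_le_mul_of_nonneg_left (hm i hi hk) (hc i hi)
  have hgb : BddAbove (Set.range fun k => ∑ i ∈ t, c i * r i k) := by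
    refine ⟨∑ i ∈ t, c i, ?_⟩
    rintro x ⟨k, rfl⟩
    apply Finset.sum_le_sum
    intro i hi
    calc c i * r i k ≤ c i * 1 := mul_le_mul_of_nonneg_left (hb i hi k) (hc i hi)
      _ = c i := mul_one _
  exact tendsto_nhds_unique (tendsto_atTop_ciSup hgmono hgb) htend

lemma iSup_two_mul (a b : ℝ) (ha : 0 ≤ a) (hb : 0 ≤ b) (u v : ℕ → ℝ)
    (hmu : Monotone u) (hmv : Monotone v) (hbu : ∀ k, u k ≤ 1) (hbv : ∀ k, v k ≤ 1) :
    ⨆ k : ℕ, (a * u k + b * v k) = a * (⨆ k, u k) + b * ⨆ k, v k := by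
  have hbuB : BddAbove (Set.range u) := ⟨1, by rintro x ⟨k, rfl⟩; exact hbu k⟩
  have hbvB : BddAbove (Set.range v) := ⟨1, by rintro x ⟨k, rfl⟩; exact hbv k⟩
  have htend : Filter.Tendsto (fun k => a * u k + b * v k) Filter.atTop
      (nhds (a * (⨆ k, u k) + b * ⨆ k, v k)) :=
    Filter.Tendsto.add
      (Filter.Tendsto.const_mul a (tendsto_atTop_ciSup hmu hbuB))
      (Filter.Tendsto.const_mul b (tendsto_atTop_ciSup hmv hbvB))
  have hgmono : Monotone (fun k => a * u k + b * v k) := fun k1 k2 hk =>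
    add_le_add (mul_le_mul_of_nonneg_left (hmu hk) ha) (mul_le_mul_of_nonneg_left (hmv hk) hb)
  have hgb : BddAbove (Set.range fun k => a * u k + b * v k) := by
    refine ⟨a + b, ?_⟩
    rintro x ⟨k, rfl⟩
    have h1 : a * u k ≤ a := by calc a * u k ≤ a * 1 := by gcongr; exact hbu k
                                  _ = a := mul_one a
    have h2 : b * v k ≤ b := by calc b * v k ≤ b * 1 := by gcongr; exact hbv k
                                  _ = b := mul_one b
    exact add_le_add h1 h2
  exact tendsto_nhds_unique (tendsto_atTop_ciSup hgmono hgb) htend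

/-- exchange of `⨆` with the nested game sums -/
lemma iSup_nested (G : SG S A) (s : S) (w : A → ℝ) (hw : ∀ a, 0 ≤ w a)
    (r : A → S → ℕ → ℝ) (hm : ∀ a s', Monotone (r a s')) (hb : ∀ a s' k, r a s' k ≤ 1) :
    ⨆ k : ℕ, ∑ a ∈ G.Av s, w a * ∑ s' : S, G.δ s a s' * r a s' k
      = ∑ a ∈ G.Av s, w a * ∑ s' : S, G.δ s a s' * ⨆ k, r a s' k := by
  have flat : ∀ q : A → S → ℝ,
      (∑ a ∈ G.Av s, w a * ∑ s' : S, G.δ s a s' * q a s')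
        = ∑ x ∈ (G.Av s) ×ˢ (Finset.univ : Finset S), (w x.1 * G.δ s x.1 x.2) * q x.1 x.2 := by
    intro q
    rw [Finset.sum_product]
    apply Finset.sum_congr rfl
    intro a _
    rw [Finset.mul_sum]
    exact Finset.sum_congr rfl fun s' _ => by ring
  calc ⨆ k : ℕ, ∑ a ∈ G.Av s, w a * ∑ s' : S, G.δ s a s' * r a s' k
      = ⨆ k : ℕ, ∑ x ∈ (G.Av s) ×ˢ (Finset.univ : Finset S),
          (w x.1 * G.δ s x.1 x.2) * r x.1 x.2 k := by
        congr 1; funext k; exact flat (fun a s' => r a s' k)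
    _ = ∑ x ∈ (G.Av s) ×ˢ (Finset.univ : Finset S),
          (w x.1 * G.δ s x.1 x.2) * ⨆ k, r x.1 x.2 k := by
        apply iSup_sum_mul
        · intro x _; exact mul_nonneg (hw x.1) (G.δ_nonneg s x.1 x.2)
        · intro x _; exact hm x.1 x.2
        · intro x _ k; exact hb x.1 x.2 k
    _ = ∑ a ∈ G.Av s, w a * ∑ s' : S, G.δ s a s' * ⨆ k, r a s' k :=
        (flat (fun a s' => ⨆ k, r a s' k)).symm

end AuxProof5

section AuxProof6
set_option linter.unusedSectionVars false

variable {S A : Type} [Fintype S] [Fintype A] {n : ℕ}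

/-- Maximizer's likelihood weight of a history (product of Maximizer choice probs). -/
def wgtAux (G : SG S A) (σ : Strategy G) : List (S × A) → List (S × A) → ℝ
  | _, [] => 1
  | pre, q :: rest =>
    (if G.isMax q.1 then σ.choice pre q.1 q.2 else 1) * wgtAux G σ (pre ++ [q]) rest

def wgt (G : SG S A) (σ : Strategy G) (h : List (S × A)) : ℝ := wgtAux G σ [] h

lemma wgtAux_nonneg (G : SG S A) (σ : Strategy G) :
    ∀ (h pre : List (S × A)), 0 ≤ wgtAux G σ pre h
  | [], _ => by unfold wgtAux; norm_num
  | q :: rest, pre => by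
    unfold wgtAux
    apply mul_nonneg
    · split
      · exact σ.nonneg _ _ _
      · norm_num
    · exact wgtAux_nonneg G σ rest (pre ++ [q])

lemma wgt_nonneg (G : SG S A) (σ : Strategy G) (h : List (S × A)) : 0 ≤ wgt G σ h :=
  wgtAux_nonneg G σ h []

lemma wgtAux_append (G : SG S A) (σ : Strategy G) :
    ∀ (h pre : List (S × A)) (t : S) (a : A),
    wgtAux G σ pre (h ++ [(t,a)])
      = wgtAux G σ pre h * (if G.isMax t then σ.choice (pre ++ h) t a else 1)
  | [], pre, t, a => by
    show (if G.isMax t then σ.choice pre t a else 1) * wgtAux G σ (pre ++ [(t,a)]) [] = _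
    show (if G.isMax t then σ.choice pre t a else 1) * 1
      = 1 * (if G.isMax t then σ.choice (pre ++ []) t a else 1)
    rw [List.append_nil, one_mul, mul_one]
  | q :: rest, pre, t, a => by
    show (if G.isMax q.1 then σ.choice pre q.1 q.2 else 1)
        * wgtAux G σ (pre ++ [q]) (rest ++ [(t,a)]) = _
    rw [wgtAux_append G σ rest (pre ++ [q]) t a]
    show _ = (if G.isMax q.1 then σ.choice pre q.1 q.2 else 1) * wgtAux G σ (pre ++ [q]) rest
        * (if G.isMax t then σ.choice (pre ++ q :: rest) t a else 1)
    rw [show pre ++ [q] ++ rest = pre ++ q :: rest from by rw [List.append_assoc]; rfl]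
    ring

lemma wgt_append (G : SG S A) (σ : Strategy G) (h : List (S × A)) (t : S) (a : A) :
    wgt G σ (h ++ [(t,a)]) = wgt G σ h * (if G.isMax t then σ.choice h t a else 1) := by
  unfold wgt
  rw [wgtAux_append G σ h [] t a, List.nil_append]

lemma wgt_nil (G : SG S A) (σ : Strategy G) : wgt G σ [] = 1 := rfl

/-- behavioral mixture of two Maximizer strategies -/
def mix (G : SG S A) (σ₁ σ₂ : Strategy G) (lam : ℝ) (h0 : 0 ≤ lam) (h1 : lam ≤ 1) :
    Strategy G where
  choice h t a :=
    if lam * wgt G σ₁ h + (1 - lam) * wgt G σ₂ h = 0 then σ₁.choice h t a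
    else (lam * wgt G σ₁ h * σ₁.choice h t a + (1 - lam) * wgt G σ₂ h * σ₂.choice h t a)
      / (lam * wgt G σ₁ h + (1 - lam) * wgt G σ₂ h)
  nonneg h t a := by
    split
    · exact σ₁.nonneg h t a
    · apply div_nonneg
      · have := wgt_nonneg G σ₁ h
        have := wgt_nonneg G σ₂ h
        have := σ₁.nonneg h t a
        have := σ₂.nonneg h t a
        have hμ : 0 ≤ 1 - lam := by linarith
        positivity
      · have hμ : 0 ≤ 1 - lam := by linarith
        have := wgt_nonneg G σ₁ h
        have := wgt_nonneg G σ₂ h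
        positivity
  supp h t a ha := by
    split
    · exact σ₁.supp h t a ha
    · rw [σ₁.supp h t a ha, σ₂.supp h t a ha]
      simp
  sum_one h t := by
    split
    · exact σ₁.sum_one h t
    · rename_i hW
      rw [← Finset.sum_div]
      rw [div_eq_one_iff_eq hW]
      rw [Finset.sum_add_distrib, ← Finset.mul_sum, ← Finset.mul_sum,
        σ₁.sum_one h t, σ₂.sum_one h t, mul_one, mul_one]

lemma mix_choice_eq (G : SG S A) (σ₁ σ₂ : Strategy G) (lam : ℝ) (h0 : 0 ≤ lam) (h1 : lam ≤ 1)
    (h : List (S × A)) (t : S) (a : A) :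
    (mix G σ₁ σ₂ lam h0 h1).choice h t a =
      if lam * wgt G σ₁ h + (1 - lam) * wgt G σ₂ h = 0 then σ₁.choice h t a
      else (lam * wgt G σ₁ h * σ₁.choice h t a + (1 - lam) * wgt G σ₂ h * σ₂.choice h t a)
        / (lam * wgt G σ₁ h + (1 - lam) * wgt G σ₂ h) := rfl

lemma reachBy_succ (G : SG S A) (σ τ : Strategy G) (T : Set S) (k : ℕ) (h : List (S × A))
    (s : S) :
    reachBy G σ τ T (k+1) h s = if s ∈ T then (1:ℝ) else ∑ a ∈ G.Av s,
      (if G.isMax s then σ.choice h s a else τ.choice h s a) *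
      ∑ s' : S, G.δ s a s' * reachBy G σ τ T k (h ++ [(s,a)]) s' := rfl

lemma reachBy_zero (G : SG S A) (σ τ : Strategy G) (T : Set S) (h : List (S × A)) (s : S) :
    reachBy G σ τ T 0 h s = if s ∈ T then (1:ℝ) else 0 := rfl

lemma mix_key (G : SG S A) (σ₁ σ₂ τ : Strategy G) {lam : ℝ} (h0 : 0 ≤ lam) (h1 : lam ≤ 1)
    (T : Set S) :
    ∀ (k : ℕ) (h : List (S × A)) (t : S),
    (lam * wgt G σ₁ h + (1 - lam) * wgt G σ₂ h) * reachBy G (mix G σ₁ σ₂ lam h0 h1) τ T k h t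
      = lam * wgt G σ₁ h * reachBy G σ₁ τ T k h t
        + (1 - lam) * wgt G σ₂ h * reachBy G σ₂ τ T k h t
  | 0, h, t => by
    rw [reachBy_zero, reachBy_zero, reachBy_zero]
    split <;> ring
  | (k+1), h, t => by
    rw [reachBy_succ, reachBy_succ, reachBy_succ]
    by_cases htT : t ∈ T
    · rw [if_pos htT, if_pos htT, if_pos htT]; ring
    rw [if_neg htT, if_neg htT, if_neg htT]
    have hw1 : 0 ≤ wgt G σ₁ h := wgt_nonneg G σ₁ h
    have hw2 : 0 ≤ wgt G σ₂ h := wgt_nonneg G σ₂ h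
    have hμ : 0 ≤ 1 - lam := by linarith
    by_cases hM : G.isMax t
    · -- Maximizer state
      have hroot : ∀ a, (lam * wgt G σ₁ h + (1 - lam) * wgt G σ₂ h)
            * (mix G σ₁ σ₂ lam h0 h1).choice h t a
          = lam * wgt G σ₁ (h ++ [(t,a)]) + (1 - lam) * wgt G σ₂ (h ++ [(t,a)]) := by
        intro a
        rw [wgt_append, wgt_append, if_pos hM, if_pos hM, mix_choice_eq]
        by_cases hW : lam * wgt G σ₁ h + (1 - lam) * wgt G σ₂ h = 0
        · rw [if_pos hW, hW, zero_mul]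
          have hn1 : 0 ≤ lam * wgt G σ₁ h := mul_nonneg h0 hw1
          have hn2 : 0 ≤ (1 - lam) * wgt G σ₂ h := mul_nonneg hμ hw2
          have e1 : lam * wgt G σ₁ h = 0 := by linarith
          have e2 : (1 - lam) * wgt G σ₂ h = 0 := by linarith
          rw [show lam * (wgt G σ₁ h * σ₁.choice h t a)
              = (lam * wgt G σ₁ h) * σ₁.choice h t a from by ring, e1,
            show (1 - lam) * (wgt G σ₂ h * σ₂.choice h t a)
              = ((1 - lam) * wgt G σ₂ h) * σ₂.choice h t a from by ring, e2]
          ring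
        · rw [if_neg hW, mul_comm, div_mul_cancel₀ _ hW]
          ring
      have hIH : ∀ a s', (lam * wgt G σ₁ (h ++ [(t,a)]) + (1 - lam) * wgt G σ₂ (h ++ [(t,a)]))
          * reachBy G (mix G σ₁ σ₂ lam h0 h1) τ T k (h ++ [(t,a)]) s'
          = lam * wgt G σ₁ (h ++ [(t,a)]) * reachBy G σ₁ τ T k (h ++ [(t,a)]) s'
            + (1 - lam) * wgt G σ₂ (h ++ [(t,a)]) * reachBy G σ₂ τ T k (h ++ [(t,a)]) s' :=
        fun a s' => mix_key G σ₁ σ₂ τ h0 h1 T k (h ++ [(t,a)]) s'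
      simp only [if_pos hM]
      rw [Finset.mul_sum]
      have hterm : ∀ a ∈ G.Av t,
          (lam * wgt G σ₁ h + (1 - lam) * wgt G σ₂ h) *
            ((mix G σ₁ σ₂ lam h0 h1).choice h t a *
              ∑ s' : S, G.δ t a s' * reachBy G (mix G σ₁ σ₂ lam h0 h1) τ T k (h ++ [(t,a)]) s')
          = lam * wgt G σ₁ h * (σ₁.choice h t a *
                ∑ s' : S, G.δ t a s' * reachBy G σ₁ τ T k (h ++ [(t,a)]) s')
            + (1 - lam) * wgt G σ₂ h * (σ₂.choice h t a *
                ∑ s' : S, G.δ t a s' * reachBy G σ₂ τ T k (h ++ [(t,a)]) s') := by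
        intro a _
        rw [← mul_assoc, hroot a, Finset.mul_sum]
        have : ∀ s' : S, (lam * wgt G σ₁ (h ++ [(t,a)]) + (1 - lam) * wgt G σ₂ (h ++ [(t,a)]))
              * (G.δ t a s' * reachBy G (mix G σ₁ σ₂ lam h0 h1) τ T k (h ++ [(t,a)]) s')
            = lam * wgt G σ₁ (h ++ [(t,a)]) * (G.δ t a s' * reachBy G σ₁ τ T k (h ++ [(t,a)]) s')
              + (1 - lam) * wgt G σ₂ (h ++ [(t,a)])
                * (G.δ t a s' * reachBy G σ₂ τ T k (h ++ [(t,a)]) s') := by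
          intro s'
          have := hIH a s'
          calc (lam * wgt G σ₁ (h ++ [(t,a)]) + (1 - lam) * wgt G σ₂ (h ++ [(t,a)]))
                * (G.δ t a s' * reachBy G (mix G σ₁ σ₂ lam h0 h1) τ T k (h ++ [(t,a)]) s')
              = G.δ t a s' * ((lam * wgt G σ₁ (h ++ [(t,a)])
                  + (1 - lam) * wgt G σ₂ (h ++ [(t,a)]))
                  * reachBy G (mix G σ₁ σ₂ lam h0 h1) τ T k (h ++ [(t,a)]) s') := by ring
            _ = G.δ t a s' * (lam * wgt G σ₁ (h ++ [(t,a)]) * reachBy G σ₁ τ T k (h ++ [(t,a)]) s'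
                  + (1 - lam) * wgt G σ₂ (h ++ [(t,a)])
                    * reachBy G σ₂ τ T k (h ++ [(t,a)]) s') := by rw [this]
            _ = _ := by ring
        rw [Finset.sum_congr rfl fun s' _ => this s', Finset.sum_add_distrib,
          ← Finset.mul_sum, ← Finset.mul_sum]
        rw [wgt_append, wgt_append]
        simp only [if_pos hM]
        ring
      rw [Finset.sum_congr rfl hterm, Finset.sum_add_distrib,
        ← Finset.mul_sum, ← Finset.mul_sum]
    · -- Minimizer state
      have hwa1 : ∀ a : A, wgt G σ₁ (h ++ [(t,a)]) = wgt G σ₁ h := by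
        intro a; rw [wgt_append, if_neg hM, mul_one]
      have hwa2 : ∀ a : A, wgt G σ₂ (h ++ [(t,a)]) = wgt G σ₂ h := by
        intro a; rw [wgt_append, if_neg hM, mul_one]
      have hIH : ∀ a s', (lam * wgt G σ₁ h + (1 - lam) * wgt G σ₂ h)
          * reachBy G (mix G σ₁ σ₂ lam h0 h1) τ T k (h ++ [(t,a)]) s'
          = lam * wgt G σ₁ h * reachBy G σ₁ τ T k (h ++ [(t,a)]) s'
            + (1 - lam) * wgt G σ₂ h * reachBy G σ₂ τ T k (h ++ [(t,a)]) s' := by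
        intro a s'
        have := mix_key G σ₁ σ₂ τ h0 h1 T k (h ++ [(t,a)]) s'
        rwa [hwa1 a, hwa2 a] at this
      simp only [if_neg hM]
      rw [Finset.mul_sum]
      have hterm : ∀ a ∈ G.Av t,
          (lam * wgt G σ₁ h + (1 - lam) * wgt G σ₂ h) *
            (τ.choice h t a *
              ∑ s' : S, G.δ t a s' * reachBy G (mix G σ₁ σ₂ lam h0 h1) τ T k (h ++ [(t,a)]) s')
          = lam * wgt G σ₁ h * (τ.choice h t a *
                ∑ s' : S, G.δ t a s' * reachBy G σ₁ τ T k (h ++ [(t,a)]) s')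
            + (1 - lam) * wgt G σ₂ h * (τ.choice h t a *
                ∑ s' : S, G.δ t a s' * reachBy G σ₂ τ T k (h ++ [(t,a)]) s') := by
        intro a _
        have hInner : (lam * wgt G σ₁ h + (1 - lam) * wgt G σ₂ h)
              * ∑ s' : S, G.δ t a s' * reachBy G (mix G σ₁ σ₂ lam h0 h1) τ T k (h ++ [(t,a)]) s'
            = lam * wgt G σ₁ h * ∑ s' : S, G.δ t a s' * reachBy G σ₁ τ T k (h ++ [(t,a)]) s'
              + (1 - lam) * wgt G σ₂ h
                * ∑ s' : S, G.δ t a s' * reachBy G σ₂ τ T k (h ++ [(t,a)]) s' := by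
          rw [Finset.mul_sum, Finset.mul_sum, Finset.mul_sum, ← Finset.sum_add_distrib]
          apply Finset.sum_congr rfl
          intro s' _
          have := hIH a s'
          calc (lam * wgt G σ₁ h + (1 - lam) * wgt G σ₂ h)
                * (G.δ t a s' * reachBy G (mix G σ₁ σ₂ lam h0 h1) τ T k (h ++ [(t,a)]) s')
              = G.δ t a s' * ((lam * wgt G σ₁ h + (1 - lam) * wgt G σ₂ h)
                  * reachBy G (mix G σ₁ σ₂ lam h0 h1) τ T k (h ++ [(t,a)]) s') := by ring
            _ = G.δ t a s' * (lam * wgt G σ₁ h * reachBy G σ₁ τ T k (h ++ [(t,a)]) s'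
                  + (1 - lam) * wgt G σ₂ h * reachBy G σ₂ τ T k (h ++ [(t,a)]) s') := by
                rw [this]
            _ = _ := by ring
        rw [show (lam * wgt G σ₁ h + (1 - lam) * wgt G σ₂ h) *
              (τ.choice h t a *
                ∑ s' : S, G.δ t a s' * reachBy G (mix G σ₁ σ₂ lam h0 h1) τ T k (h ++ [(t,a)]) s')
            = τ.choice h t a * ((lam * wgt G σ₁ h + (1 - lam) * wgt G σ₂ h) *
                ∑ s' : S, G.δ t a s' * reachBy G (mix G σ₁ σ₂ lam h0 h1) τ T k (h ++ [(t,a)]) s')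
            from by ring, hInner]
        ring
      rw [Finset.sum_congr rfl hterm, Finset.sum_add_distrib,
        ← Finset.mul_sum, ← Finset.mul_sum]

lemma unitCube_convex : Convex ℝ (unitCube n) := by
  rw [← Box1_eq_unitCube]; exact convex_Box1

lemma zero_mem_unitCube : (0 : Vec n) ∈ unitCube n := by
  intro i; simp

lemma zero_mem_Ach (G : SG S A) (Tgt : Fin n → Set S) (s : S) :
    (0 : Vec n) ∈ Ach G Tgt s := by
  refine ⟨zero_mem_unitCube, dfltStrat G, fun τ i => ?_⟩
  show (0 : Vec n) i ≤ _
  show (0:ℝ) ≤ _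
  exact probReach_nonneg G (dfltStrat G) τ s (Tgt i)

lemma Ach_convex (G : SG S A) (Tgt : Fin n → Set S) (s : S) :
    Convex ℝ (Ach G Tgt s) := by
  intro x hx y hy a b ha hb hab
  obtain ⟨hxC, σ₁, hσ₁⟩ := hx
  obtain ⟨hyC, σ₂, hσ₂⟩ := hy
  have hb' : b = 1 - a := by linarith
  subst hb'
  have ha1 : a ≤ 1 := by linarith
  refine ⟨unitCube_convex hxC hyC ha hb hab, mix G σ₁ σ₂ a ha ha1, fun τ i => ?_⟩
  have hkey : ∀ k, reachBy G (mix G σ₁ σ₂ a ha ha1) τ (Tgt i) k [] s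
      = a * reachBy G σ₁ τ (Tgt i) k [] s + (1 - a) * reachBy G σ₂ τ (Tgt i) k [] s := by
    intro k
    have := mix_key G σ₁ σ₂ τ ha ha1 (Tgt i) k [] s
    rw [wgt_nil, wgt_nil, mul_one, mul_one] at this
    rw [show a + (1 - a) = 1 from by ring, one_mul] at this
    exact this
  have hsup : probReach G (mix G σ₁ σ₂ a ha ha1) τ s (Tgt i)
      = a * probReach G σ₁ τ s (Tgt i) + (1 - a) * probReach G σ₂ τ s (Tgt i) := by
    unfold probReach
    rw [show (fun k => reachBy G (mix G σ₁ σ₂ a ha ha1) τ (Tgt i) k [] s)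
        = fun k => a * reachBy G σ₁ τ (Tgt i) k [] s
            + (1 - a) * reachBy G σ₂ τ (Tgt i) k [] s from funext hkey]
    exact iSup_two_mul a (1-a) ha hb _ _
      (reachBy_monotone G σ₁ τ (Tgt i) [] s) (reachBy_monotone G σ₂ τ (Tgt i) [] s)
      (fun k => reachBy_le_one G σ₁ τ (Tgt i) k [] s)
      (fun k => reachBy_le_one G σ₂ τ (Tgt i) k [] s)
  rw [hsup]
  have : (a • x + (1 - a) • y) i = a * x i + (1 - a) * y i := by
    simp [Pi.add_apply, Pi.smul_apply, smul_eq_mul]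
  rw [this]
  exact add_le_add (mul_le_mul_of_nonneg_left (hσ₁ τ i) ha)
    (mul_le_mul_of_nonneg_left (hσ₂ τ i) hb)

end AuxProof6

section AuxProof7
set_option linter.unusedSectionVars false
set_option maxHeartbeats 1000000

variable {S A : Type} [Fintype S] [Fintype A] {n : ℕ}

lemma indVec_eq_zero {Tgt : Fin n → Set S} {s : S} {i : Fin n} (h : s ∉ Tgt i) :
    indVec Tgt s i = 0 := by unfold indVec; rw [if_neg h]

lemma indVec_eq_one {Tgt : Fin n → Set S} {s : S} {i : Fin n} (h : s ∈ Tgt i) :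
    indVec Tgt s i = 1 := by unfold indVec; rw [if_pos h]

/-- upper bound on `v i` when `s ∈ Tgt i` : handled via `reachBy 0` -/
lemma le_probReach_of_tgt (G : SG S A) (Tgt : Fin n → Set S) (σ τ : Strategy G) {s : S}
    {i : Fin n} (hsT : s ∈ Tgt i) {v : Vec n} (hv1 : v i ≤ 1) :
    v i ≤ probReach G σ τ s (Tgt i) := by
  calc v i ≤ 1 := hv1
    _ = reachBy G σ τ (Tgt i) 0 [] s := by rw [reachBy_zero, if_pos hsT]
    _ ≤ probReach G σ τ s (Tgt i) := reachBy_le_probReach G σ τ (Tgt i) 0 s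

/-- probReach of a left-glued strategy dominates the glued expectation -/
lemma probReach_glue_left_ge (G : SG S A) (Tgt : Fin n → Set S) {s : S} {i : Fin n}
    (hsT : s ∉ Tgt i) (p : A → ℝ) (hp1 : ∀ a, 0 ≤ p a) (hp2 : ∀ a, a ∉ G.Av s → p a = 0)
    (hp3 : ∑ a ∈ G.Av s, p a = 1) (cont : A → S → Strategy G) (τ : Strategy G) :
    probReach G (glue G s p hp1 hp2 hp3 cont) τ s (Tgt i)
      = ∑ a ∈ G.Av s, (if G.isMax s then p a else τ.choice [] s a) *
          ∑ s' : S, G.δ s a s' *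
            probReach G (cont a s') (τ.shift [(s,a)]) s' (Tgt i) := by
  set σ := glue G s p hp1 hp2 hp3 cont with hσ
  have hstep : ∀ k, reachBy G σ τ (Tgt i) (k+1) [] s
      = ∑ a ∈ G.Av s, (if G.isMax s then p a else τ.choice [] s a) *
          ∑ s' : S, G.δ s a s' *
            reachBy G (cont a s') (τ.shift [(s,a)]) (Tgt i) k [] s' :=
    fun k => reachBy_glue_left G hsT p hp1 hp2 hp3 cont τ k
  have hmono : Monotone (fun k => reachBy G σ τ (Tgt i) k [] s) :=
    reachBy_monotone G σ τ (Tgt i) [] s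
  have h1 : probReach G σ τ s (Tgt i) = ⨆ k : ℕ, reachBy G σ τ (Tgt i) (k+1) [] s := by
    unfold probReach
    apply le_antisymm
    · apply ciSup_le
      intro k
      have hb : BddAbove (Set.range fun k => reachBy G σ τ (Tgt i) (k+1) [] s) :=
        ⟨1, by rintro x ⟨m, rfl⟩; exact reachBy_le_one G σ τ (Tgt i) (m+1) [] s⟩
      calc reachBy G σ τ (Tgt i) k [] s ≤ reachBy G σ τ (Tgt i) (k+1) [] s :=
            reachBy_mono G σ τ (Tgt i) k [] s
        _ ≤ _ := le_ciSup hb k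
    · exact ciSup_le fun k => reachBy_le_probReach G σ τ (Tgt i) (k+1) s
  rw [h1, show (fun k : ℕ => reachBy G σ τ (Tgt i) (k+1) [] s)
      = fun k : ℕ => ∑ a ∈ G.Av s, (if G.isMax s then p a else τ.choice [] s a) *
          ∑ s' : S, G.δ s a s' *
            reachBy G (cont a s') (τ.shift [(s,a)]) (Tgt i) k [] s' from funext hstep]
  have := iSup_nested G s (fun a => if G.isMax s then p a else τ.choice [] s a)
    (fun a => by split; exacts [hp1 a, τ.nonneg [] s a])
    (fun a s' k => reachBy G (cont a s') (τ.shift [(s,a)]) (Tgt i) k [] s')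
    (fun a s' => reachBy_monotone G (cont a s') (τ.shift [(s,a)]) (Tgt i) [] s')
    (fun a s' k => reachBy_le_one G (cont a s') (τ.shift [(s,a)]) (Tgt i) k [] s')
  rw [this]
  rfl

/-- one-step closure of `Ach` under the Bellman operator -/
lemma Bop_Ach_subset (G : SG S A) (Tgt : Fin n → Set S) (s : S) :
    Bop G Tgt (Ach G Tgt) s ⊆ Ach G Tgt s := by
  classical
  intro v hv
  have hvB : v ∈ Box1 n := Bop_subset_Box1 hv
  have hvC : v ∈ unitCube n := by rw [← Box1_eq_unitCube]; exact hvB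
  by_cases hmax : G.isMax s
  · -- Maximizer state
    rw [mem_Bop_max hmax, convexHull_eq] at hv
    obtain ⟨ι, tf, w, zf, hw0, hw1, hzU, hcm⟩ := hv
    have haj : ∀ j ∈ tf, ∃ a, a ∈ G.Av s ∧ zf j ∈ SA G Tgt (Ach G Tgt) s a := by
      intro j hj
      rcases Set.mem_iUnion₂.mp (hzU j hj) with ⟨a, ha, h⟩
      exact ⟨a, ha, h⟩
    have hAne : Nonempty A := ⟨(G.av_nonempty s).choose⟩
    choose! aj haj1 haj2 using haj
    choose! yj hyj1 hyj2 using fun j (hj : j ∈ tf) => (mem_SA_elim (haj2 j hj)).2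
    set q : A → ℝ := fun a => ∑ j ∈ tf.filter (fun j => aj j = a), w j with hq
    have hq1 : ∀ a, 0 ≤ q a := fun a =>
      Finset.sum_nonneg fun j hj => hw0 j (Finset.mem_filter.mp hj).1
    have hq2 : ∀ a, a ∉ G.Av s → q a = 0 := by
      intro a ha
      rw [hq]
      dsimp only
      rw [Finset.filter_false_of_mem, Finset.sum_empty]
      intro j hj hja
      exact ha (hja ▸ haj1 j hj)
    have hq3 : ∑ a ∈ G.Av s, q a = 1 := by
      rw [hq]
      dsimp only
      rw [Finset.sum_fiberwise_of_maps_to (fun j hj => haj1 j hj) w]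
      exact hw1
    set yb : A → S → Vec n := fun a s' =>
      if q a = 0 then 0
      else fun i => (∑ j ∈ tf.filter (fun j => aj j = a), w j * yj j s' i) / q a with hyb
    have hybA : ∀ a s', yb a s' ∈ Ach G Tgt s' := by
      intro a s'
      rw [hyb]
      dsimp only
      split
      · exact zero_mem_Ach G Tgt s'
      · rename_i hqa
        have heq : (fun i => (∑ j ∈ tf.filter (fun j => aj j = a), w j * yj j s' i) / q a)
            = ∑ j ∈ tf.filter (fun j => aj j = a), (w j / q a) • yj j s' := by
          funext i
          rw [Finset.sum_apply, Finset.sum_div]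
          apply Finset.sum_congr rfl
          intro j _
          simp only [Pi.smul_apply, smul_eq_mul]
          ring
        rw [heq]
        refine (Ach_convex G Tgt s').sum_mem ?_ ?_ ?_
        · intro j hj
          exact div_nonneg (hw0 j (Finset.mem_filter.mp hj).1) (hq1 a)
        · rw [← Finset.sum_div]
          exact div_self hqa
        · intro j hj
          exact hyj1 j (Finset.mem_filter.mp hj).1 s'
    have hstrat : ∀ a s', ∃ σc : Strategy G, ∀ τ i, yb a s' i ≤ probReach G σc τ s' (Tgt i) := by
      intro a s'
      obtain ⟨-, σc, hσc⟩ := hybA a s'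
      exact ⟨σc, hσc⟩
    choose cont hcont using hstrat
    refine ⟨hvC, glue G s q hq1 hq2 hq3 cont, ?_⟩
    intro τ i
    by_cases hsT : s ∈ Tgt i
    · exact le_probReach_of_tgt G Tgt _ τ hsT (mem_Box1.mp hvB i).2
    rw [probReach_glue_left_ge G Tgt hsT q hq1 hq2 hq3 cont τ]
    simp only [if_pos hmax]
    have hvsum : v i = ∑ j ∈ tf, w j * zf j i := by
      rw [← hcm, Finset.centerMass_eq_of_sum_1 _ _ hw1, Finset.sum_apply]
      exact Finset.sum_congr rfl fun j _ => by simp [Pi.smul_apply, smul_eq_mul]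
    have hkey : ∀ a ∈ G.Av s, ∑ j ∈ tf.filter (fun j => aj j = a),
          w j * ∑ s' : S, G.δ s (aj j) s' * yj j s' i
        ≤ q a * ∑ s' : S, G.δ s a s' * probReach G (cont a s') (τ.shift [(s,a)]) s' (Tgt i) := by
      intro a _
      have haj_eq : ∑ j ∈ tf.filter (fun j => aj j = a),
            w j * ∑ s' : S, G.δ s (aj j) s' * yj j s' i
          = ∑ j ∈ tf.filter (fun j => aj j = a),
            w j * ∑ s' : S, G.δ s a s' * yj j s' i := by
        apply Finset.sum_congr rfl
        intro j hj
        rw [(Finset.mem_filter.mp hj).2]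
      rw [haj_eq]
      by_cases hqa : q a = 0
      · have hz : ∀ j ∈ tf.filter (fun j => aj j = a), w j = 0 := by
          have hnn : ∀ j ∈ tf.filter (fun j => aj j = a), 0 ≤ w j :=
            fun j hj => hw0 j (Finset.mem_filter.mp hj).1
          exact (Finset.sum_eq_zero_iff_of_nonneg hnn).mp hqa
        rw [Finset.sum_congr rfl fun j hj => by rw [hz j hj, zero_mul], Finset.sum_const_zero,
          hqa, zero_mul]
      · have hyb_val : ∀ s' i', yb a s' i'
            = (∑ j ∈ tf.filter (fun j => aj j = a), w j * yj j s' i') / q a := by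
          intro s' i'
          rw [hyb]
          dsimp only
          rw [if_neg hqa]
        have hswap : ∑ j ∈ tf.filter (fun j => aj j = a),
              w j * ∑ s' : S, G.δ s a s' * yj j s' i
            = ∑ s' : S, G.δ s a s' * ∑ j ∈ tf.filter (fun j => aj j = a), w j * yj j s' i := by
          rw [Finset.sum_congr rfl fun j (_ : j ∈ tf.filter (fun j => aj j = a)) =>
            Finset.mul_sum Finset.univ (fun s' => G.δ s a s' * yj j s' i) (w j)]
          rw [Finset.sum_comm]
          apply Finset.sum_congr rfl
          intro s' _
          rw [Finset.mul_sum]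
          apply Finset.sum_congr rfl
          intro j _
          ring
        have hfib : ∀ s', ∑ j ∈ tf.filter (fun j => aj j = a), w j * yj j s' i
            = q a * yb a s' i := by
          intro s'
          rw [hyb_val s' i, mul_div_cancel₀ _ hqa]
        rw [hswap, Finset.sum_congr rfl fun s' _ => by rw [hfib s']]
        have : ∑ s' : S, G.δ s a s' * (q a * yb a s' i)
            = q a * ∑ s' : S, G.δ s a s' * yb a s' i := by
          rw [Finset.mul_sum]
          exact Finset.sum_congr rfl fun s' _ => by ring
        rw [this]
        apply mul_le_mul_of_nonneg_left _ (hq1 a)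
        apply Finset.sum_le_sum
        intro s' _
        exact mul_le_mul_of_nonneg_left (hcont a s' (τ.shift [(s,a)]) i) (G.δ_nonneg s a s')
    calc v i = ∑ j ∈ tf, w j * zf j i := hvsum
      _ ≤ ∑ j ∈ tf, w j * ∑ s' : S, G.δ s (aj j) s' * yj j s' i := by
          apply Finset.sum_le_sum
          intro j hj
          apply mul_le_mul_of_nonneg_left _ (hw0 j hj)
          calc zf j i ≤ indVec Tgt s i + ∑ s' : S, G.δ s (aj j) s' * yj j s' i := hyj2 j hj i
            _ = ∑ s' : S, G.δ s (aj j) s' * yj j s' i := by rw [indVec_eq_zero hsT, zero_add]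
      _ = ∑ a ∈ G.Av s, ∑ j ∈ tf.filter (fun j => aj j = a),
            w j * ∑ s' : S, G.δ s (aj j) s' * yj j s' i :=
          (Finset.sum_fiberwise_of_maps_to (fun j hj => haj1 j hj) _).symm
      _ ≤ ∑ a ∈ G.Av s, q a *
            ∑ s' : S, G.δ s a s' * probReach G (cont a s') (τ.shift [(s,a)]) s' (Tgt i) :=
          Finset.sum_le_sum hkey
  · -- Minimizer state
    rw [mem_Bop_min hmax] at hv
    have hex : ∀ a, a ∈ G.Av s → ∃ y : S → Vec n, (∀ s', y s' ∈ Ach G Tgt s') ∧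
        ∀ i, v i ≤ indVec Tgt s i + ∑ s' : S, G.δ s a s' * y s' i :=
      fun a ha => (mem_SA_elim (hv a ha)).2
    choose! y hy1 hy2 using hex
    have hstrat : ∀ a s', ∃ σc : Strategy G,
        a ∈ G.Av s → ∀ τ i, y a s' i ≤ probReach G σc τ s' (Tgt i) := by
      intro a s'
      by_cases ha : a ∈ G.Av s
      · obtain ⟨-, σc, hσc⟩ := hy1 a ha s'
        exact ⟨σc, fun _ => hσc⟩
      · exact ⟨dfltStrat G, fun h => absurd h ha⟩
    choose cont hcont using hstrat
    refine ⟨hvC, glue G s (diracChoice G s) (diracChoice_nonneg G s) (diracChoice_supp G s)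
      (diracChoice_sum G s) cont, ?_⟩
    intro τ i
    by_cases hsT : s ∈ Tgt i
    · exact le_probReach_of_tgt G Tgt _ τ hsT (mem_Box1.mp hvB i).2
    rw [probReach_glue_left_ge G Tgt hsT (diracChoice G s) (diracChoice_nonneg G s)
      (diracChoice_supp G s) (diracChoice_sum G s) cont τ]
    simp only [if_neg hmax]
    calc v i = (∑ a ∈ G.Av s, τ.choice [] s a) * v i := by rw [τ.sum_one [] s, one_mul]
      _ = ∑ a ∈ G.Av s, τ.choice [] s a * v i := by rw [Finset.sum_mul]
      _ ≤ ∑ a ∈ G.Av s, τ.choice [] s a *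
            ∑ s' : S, G.δ s a s' * probReach G (cont a s') (τ.shift [(s,a)]) s' (Tgt i) := by
          apply Finset.sum_le_sum
          intro a ha
          apply mul_le_mul_of_nonneg_left _ (τ.nonneg [] s a)
          calc v i ≤ indVec Tgt s i + ∑ s' : S, G.δ s a s' * y a s' i := hy2 a ha i
            _ = ∑ s' : S, G.δ s a s' * y a s' i := by rw [indVec_eq_zero hsT, zero_add]
            _ ≤ ∑ s' : S, G.δ s a s' * probReach G (cont a s') (τ.shift [(s,a)]) s' (Tgt i) := by
                apply Finset.sum_le_sum
                intro s' _
                exact mul_le_mul_of_nonneg_left (hcont a s' ha (τ.shift [(s,a)]) i)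
                  (G.δ_nonneg s a s')

/-- Direction A : all lower iterates are achievable. -/
lemma L_subset_Ach (G : SG S A) (Tgt : Fin n → Set S) (k : ℕ) (s : S) :
    (bvi G Tgt k).1 s ⊆ Ach G Tgt s := by
  induction k generalizing s with
  | zero =>
    intro x hx
    rw [show (bvi G Tgt 0).1 s = ({0} : Set (Vec n)) from rfl, Set.mem_singleton_iff] at hx
    subst hx
    exact zero_mem_Ach G Tgt s
  | succ k ih =>
    intro x hx
    have h1 : (bvi G Tgt (k+1)).1 s = Bop G Tgt (bvi G Tgt k).1 s := rfl
    rw [h1] at hx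
    exact Bop_Ach_subset G Tgt s (Bop_mono (fun s' => ih (s := s')) s hx)

end AuxProof7

section AuxProof8
set_option linter.unusedSectionVars false
set_option maxHeartbeats 1000000

variable {S A : Type} [Fintype S] [Fintype A] {n : ℕ}

/-- the `k`-step achievable set -/
def AchBy (G : SG S A) (Tgt : Fin n → Set S) (k : ℕ) (s : S) : Set (Vec n) :=
  {v | v ∈ unitCube n ∧ ∃ σ : Strategy G, ∀ τ : Strategy G, ∀ i : Fin n,
    v i ≤ reachBy G σ τ (Tgt i) k [] s}

lemma AchBy_subset_L (G : SG S A) (Tgt : Fin n → Set S) :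
    ∀ (k : ℕ) (s : S), AchBy G Tgt k s ⊆ (bvi G Tgt (k+1)).1 s := by
  intro k
  induction k with
  | zero =>
    intro s v hv
    obtain ⟨hvC, σ, hσ⟩ := hv
    have hvB : v ∈ Box1 n := by rw [Box1_eq_unitCube]; exact hvC
    have hvle : ∀ i, v i ≤ indVec Tgt s i := by
      intro i
      have h := hσ (dfltStrat G) i
      rw [reachBy_zero] at h
      unfold indVec
      exact h
    have hDC0 : ∀ s', DC ((bvi G Tgt 0).1 s') := fun s' => (L_props G Tgt 0 s').2.1
    have hsub0 : ∀ s', (bvi G Tgt 0).1 s' ⊆ Box1 n := fun s' => (L_props G Tgt 0 s').1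
    have h00 : ∀ s', (0 : Vec n) ∈ (bvi G Tgt 0).1 s' := fun s' => (L_props G Tgt 0 s').2.2
    have hmem : ∀ a ∈ G.Av s, v ∈ SA G Tgt (bvi G Tgt 0).1 s a := by
      intro a _
      refine mem_SA_intro hDC0 hsub0 h00 hvB ?_
      intro i
      have hz : ∀ s' : S, G.δ s a s' * (0 : Vec n) i = 0 := fun s' => by simp
      rw [Finset.sum_congr rfl fun s' _ => hz s', Finset.sum_const_zero, add_zero]
      exact hvle i
    show v ∈ Bop G Tgt (bvi G Tgt 0).1 s
    by_cases hmax : G.isMax s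
    · rw [mem_Bop_max hmax]
      obtain ⟨a, ha⟩ := G.av_nonempty s
      exact subset_convexHull ℝ _ (Set.mem_iUnion₂.mpr ⟨a, ha, hmem a ha⟩)
    · rw [mem_Bop_min hmax]
      exact hmem
  | succ k ih =>
    intro s v hv
    obtain ⟨hvC, σ, hσ⟩ := hv
    have hvB : v ∈ Box1 n := by rw [Box1_eq_unitCube]; exact hvC
    set u : A → S → Vec n :=
      fun a s' i => ⨅ τ : Strategy G, reachBy G (σ.shift [(s,a)]) τ (Tgt i) k [] s' with hu
    have hbb : ∀ a s' i, BddBelow (Set.range fun τ : Strategy G =>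
        reachBy G (σ.shift [(s,a)]) τ (Tgt i) k [] s') := by
      intro a s' i
      exact ⟨0, by rintro x ⟨τ', rfl⟩; exact reachBy_nonneg G _ τ' (Tgt i) k [] s'⟩
    have hu_le : ∀ a s' (τ : Strategy G) i,
        u a s' i ≤ reachBy G (σ.shift [(s,a)]) τ (Tgt i) k [] s' :=
      fun a s' τ i => ciInf_le (hbb a s' i) τ
    have hu0 : ∀ a s' i, 0 ≤ u a s' i :=
      fun a s' i => Real.iInf_nonneg fun τ => reachBy_nonneg G _ τ (Tgt i) k [] s'
    have hu1 : ∀ a s' i, u a s' i ≤ 1 := fun a s' i =>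
      le_trans (hu_le a s' (dfltStrat G) i) (reachBy_le_one G _ _ (Tgt i) k [] s')
    have huL : ∀ a s', u a s' ∈ (bvi G Tgt (k+1)).1 s' := by
      intro a s'
      exact ih s' ⟨fun i => ⟨hu0 a s' i, hu1 a s' i⟩, σ.shift [(s,a)], fun τ i => hu_le a s' τ i⟩
    have hDC1 : ∀ s', DC ((bvi G Tgt (k+1)).1 s') := fun s' => (L_props G Tgt (k+1) s').2.1
    have hsub1 : ∀ s', (bvi G Tgt (k+1)).1 s' ⊆ Box1 n := fun s' => (L_props G Tgt (k+1) s').1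
    have hiinf_eq : ∀ a s' i, u a s' i
        = ⨅ τ : Strategy G, reachBy G (σ.shift [(s,a)]) τ (Tgt i) k [] s' := fun _ _ _ => rfl
    show v ∈ Bop G Tgt (bvi G Tgt (k+1)).1 s
    by_cases hmax : G.isMax s
    · -- Maximizer state
      rw [mem_Bop_max hmax]
      set p : A → ℝ := fun a => σ.choice [] s a with hp
      have hp1 : ∀ a, 0 ≤ p a := fun a => σ.nonneg [] s a
      have hp3 : ∑ a ∈ G.Av s, p a = 1 := σ.sum_one [] s
      set m : A → Fin n → ℝ := fun a i => ∑ s' : S, G.δ s a s' * u a s' i with hm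
      have hm0 : ∀ a i, 0 ≤ m a i := fun a i =>
        Finset.sum_nonneg fun s' _ => mul_nonneg (G.δ_nonneg s a s') (hu0 a s' i)
      have hm1 : ∀ a ∈ G.Av s, ∀ i, m a i ≤ 1 := by
        intro a ha i
        calc m a i ≤ ∑ s' : S, G.δ s a s' * 1 :=
              Finset.sum_le_sum fun s' _ =>
                mul_le_mul_of_nonneg_left (hu1 a s' i) (G.δ_nonneg s a s')
          _ = 1 := by simp only [mul_one]; exact G.δ_sum s a ha
      set den : Fin n → ℝ := fun i => ∑ a ∈ G.Av s, p a * m a i with hden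
      have hden0 : ∀ i, 0 ≤ den i := fun i =>
        Finset.sum_nonneg fun a _ => mul_nonneg (hp1 a) (hm0 a i)
      have hkey : ∀ i, s ∉ Tgt i → v i ≤ den i := by
        intro i hsT
        by_contra hlt
        push_neg at hlt
        set ε : ℝ := (v i - den i) / 2 with hε
        have hεpos : 0 < ε := by rw [hε]; linarith
        have hτch : ∀ a s', ∃ τ' : Strategy G,
            reachBy G (σ.shift [(s,a)]) τ' (Tgt i) k [] s' < u a s' i + ε := by
          intro a s'
          apply exists_lt_of_ciInf_lt
          rw [← hiinf_eq a s' i]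
          linarith
        choose τc hτc using hτch
        set τ := glue G s (diracChoice G s) (diracChoice_nonneg G s) (diracChoice_supp G s)
          (diracChoice_sum G s) (fun a s' => τc a s') with hτ
        have hv_le := hσ τ i
        rw [hτ, reachBy_glue_right G hsT (diracChoice G s) (diracChoice_nonneg G s)
          (diracChoice_supp G s) (diracChoice_sum G s) (fun a s' => τc a s') σ k] at hv_le
        simp only [if_pos hmax] at hv_le
        have hub : ∑ a ∈ G.Av s, σ.choice [] s a *
              ∑ s' : S, G.δ s a s' * reachBy G (σ.shift [(s,a)]) (τc a s') (Tgt i) k [] s'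
            ≤ den i + ε := by
          calc ∑ a ∈ G.Av s, σ.choice [] s a *
                ∑ s' : S, G.δ s a s' * reachBy G (σ.shift [(s,a)]) (τc a s') (Tgt i) k [] s'
              ≤ ∑ a ∈ G.Av s, p a * (m a i + ε) := by
                apply Finset.sum_le_sum
                intro a ha
                apply mul_le_mul_of_nonneg_left _ (hp1 a)
                calc ∑ s' : S, G.δ s a s' *
                      reachBy G (σ.shift [(s,a)]) (τc a s') (Tgt i) k [] s'
                    ≤ ∑ s' : S, G.δ s a s' * (u a s' i + ε) :=
                      Finset.sum_le_sum fun s' _ =>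
                        mul_le_mul_of_nonneg_left (hτc a s' ).le (G.δ_nonneg s a s')
                  _ = m a i + ε := by
                      simp only [hm]
                      rw [Finset.sum_congr rfl fun s' (_ : s' ∈ Finset.univ) =>
                          show G.δ s a s' * (u a s' i + ε)
                            = G.δ s a s' * u a s' i + G.δ s a s' * ε from by ring,
                        Finset.sum_add_distrib, ← Finset.sum_mul, G.δ_sum s a ha, one_mul]
            _ = den i + ε := by
                simp only [hden]
                rw [Finset.sum_congr rfl fun a (_ : a ∈ G.Av s) =>
                    show p a * (m a i + ε) = p a * m a i + p a * ε from by ring,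
                  Finset.sum_add_distrib, ← Finset.sum_mul, hp3, one_mul]
        linarith
      set tt : Fin n → ℝ := fun i => if den i = 0 then 0 else v i / den i with htt
      have htt01 : ∀ i, s ∉ Tgt i → 0 ≤ tt i ∧ tt i ≤ 1 := by
        intro i hsT
        rw [htt]; dsimp only; split
        · norm_num
        · rename_i hd
          have hdpos : 0 < den i := lt_of_le_of_ne (hden0 i) (Ne.symm hd)
          exact ⟨div_nonneg (mem_Box1.mp hvB i).1 (hden0 i),
            by rw [div_le_one hdpos]; exact hkey i hsT⟩
      set z : A → Vec n := fun a i => if s ∈ Tgt i then v i else tt i * m a i with hz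
      have hzmem : ∀ a ∈ G.Av s, z a ∈ SA G Tgt (bvi G Tgt (k+1)).1 s a := by
        intro a ha
        have hzB : z a ∈ Box1 n := by
          rw [mem_Box1]
          intro i
          rw [hz]; dsimp only
          split
          · exact ⟨(mem_Box1.mp hvB i).1, (mem_Box1.mp hvB i).2⟩
          · rename_i hsT
            refine ⟨mul_nonneg (htt01 i hsT).1 (hm0 a i), ?_⟩
            calc tt i * m a i ≤ 1 * 1 :=
                mul_le_mul (htt01 i hsT).2 (hm1 a ha i) (hm0 a i) zero_le_one
              _ = 1 := mul_one 1
        refine mem_SA_intro hDC1 hsub1 (fun s' => huL a s') hzB ?_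
        intro i
        have hsum0 : 0 ≤ ∑ s' : S, G.δ s a s' * u a s' i :=
          Finset.sum_nonneg fun s' _ => mul_nonneg (G.δ_nonneg s a s') (hu0 a s' i)
        rw [hz]; dsimp only
        split
        · rename_i hsT
          rw [indVec_eq_one hsT]
          have h2 := (mem_Box1.mp hvB i).2
          linarith
        · rename_i hsT
          rw [indVec_eq_zero hsT, zero_add]
          calc tt i * m a i ≤ 1 * m a i :=
              mul_le_mul_of_nonneg_right (htt01 i hsT).2 (hm0 a i)
            _ = m a i := one_mul _
            _ = ∑ s' : S, G.δ s a s' * u a s' i := by simp only [hm]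
      have hvz : v = ∑ a ∈ G.Av s, p a • z a := by
        funext i
        rw [Finset.sum_apply]
        by_cases hsT : s ∈ Tgt i
        · rw [Finset.sum_congr rfl fun a (_ : a ∈ G.Av s) =>
              show (p a • z a) i = p a * v i from by
                simp [Pi.smul_apply, smul_eq_mul, hz, hsT]]
          rw [← Finset.sum_mul, hp3, one_mul]
        · rw [Finset.sum_congr rfl fun a (_ : a ∈ G.Av s) =>
              show (p a • z a) i = p a * (tt i * m a i) from by
                simp [Pi.smul_apply, smul_eq_mul, hz, hsT]]
          by_cases hd : den i = 0
          · have hv0 : v i = 0 := le_antisymm (hd ▸ hkey i hsT) (mem_Box1.mp hvB i).1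
            have htt0 : tt i = 0 := by rw [htt]; dsimp only; rw [if_pos hd]
            rw [hv0, Finset.sum_congr rfl fun a (_ : a ∈ G.Av s) => by
              rw [htt0, zero_mul, mul_zero], Finset.sum_const_zero]
          · have htti : tt i = v i / den i := by rw [htt]; dsimp only; rw [if_neg hd]
            rw [Finset.sum_congr rfl fun a (_ : a ∈ G.Av s) =>
                show p a * (tt i * m a i) = tt i * (p a * m a i) from by ring,
              ← Finset.mul_sum,
              show ∑ a ∈ G.Av s, p a * m a i = den i from by simp only [hden],
              htti, div_mul_cancel₀ _ hd]
      rw [hvz, show ∑ a ∈ G.Av s, p a • z a = (G.Av s).centerMass p z from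
        (Finset.centerMass_eq_of_sum_1 _ _ hp3).symm]
      exact Finset.centerMass_mem_convexHull (G.Av s) (fun a _ => hp1 a)
        (by rw [hp3]; norm_num) (fun a ha => Set.mem_iUnion₂.mpr ⟨a, ha, hzmem a ha⟩)
    · -- Minimizer state
      rw [mem_Bop_min hmax]
      intro a ha
      refine mem_SA_intro hDC1 hsub1 (fun s' => huL a s') hvB ?_
      intro i
      by_cases hsT : s ∈ Tgt i
      · rw [indVec_eq_one hsT]
        have h1 : 0 ≤ ∑ s' : S, G.δ s a s' * u a s' i :=
          Finset.sum_nonneg fun s' _ => mul_nonneg (G.δ_nonneg s a s') (hu0 a s' i)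
        have h2 := (mem_Box1.mp hvB i).2
        linarith
      rw [indVec_eq_zero hsT, zero_add]
      by_contra hlt
      push_neg at hlt
      set c : ℝ := ∑ s' : S, G.δ s a s' * u a s' i with hc
      set ε : ℝ := (v i - c) / 2 with hε
      have hεpos : 0 < ε := by rw [hε]; linarith
      have hτch : ∀ s', ∃ τ' : Strategy G,
          reachBy G (σ.shift [(s,a)]) τ' (Tgt i) k [] s' < u a s' i + ε := by
        intro s'
        apply exists_lt_of_ciInf_lt
        rw [← hiinf_eq a s' i]
        linarith
      choose τc hτc using hτch
      set pdir : A → ℝ := fun b => if b = a then 1 else 0 with hpdir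
      have hpd1 : ∀ b, 0 ≤ pdir b := by intro b; rw [hpdir]; dsimp only; split <;> norm_num
      have hpd2 : ∀ b, b ∉ G.Av s → pdir b = 0 := by
        intro b hb
        rw [hpdir]
        dsimp only
        split
        · rename_i hba; exact absurd (hba ▸ ha) hb
        · rfl
      have hpd3 : ∑ b ∈ G.Av s, pdir b = 1 := by
        rw [hpdir]
        dsimp only
        rw [Finset.sum_ite_eq' (G.Av s) a (fun _ => (1:ℝ)), if_pos ha]
      set τ := glue G s pdir hpd1 hpd2 hpd3 (fun _ s' => τc s') with hτ
      have hv_le := hσ τ i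
      rw [hτ, reachBy_glue_right G hsT pdir hpd1 hpd2 hpd3 (fun _ s' => τc s') σ k] at hv_le
      simp only [if_neg hmax] at hv_le
      have hcollapse : ∑ b ∈ G.Av s, pdir b *
            ∑ s' : S, G.δ s b s' * reachBy G (σ.shift [(s,b)]) (τc s') (Tgt i) k [] s'
          = ∑ s' : S, G.δ s a s' * reachBy G (σ.shift [(s,a)]) (τc s') (Tgt i) k [] s' := by
        rw [Finset.sum_congr rfl fun b (_ : b ∈ G.Av s) =>
            show pdir b *
              (∑ s' : S, G.δ s b s' * reachBy G (σ.shift [(s,b)]) (τc s') (Tgt i) k [] s')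
            = if b = a then
                (∑ s' : S, G.δ s b s' * reachBy G (σ.shift [(s,b)]) (τc s') (Tgt i) k [] s')
              else 0 from by rw [hpdir]; dsimp only; split <;> ring,
          Finset.sum_ite_eq' (G.Av s) a
            (fun b => ∑ s' : S, G.δ s b s' * reachBy G (σ.shift [(s,b)]) (τc s') (Tgt i) k [] s'),
          if_pos ha]
      rw [hcollapse] at hv_le
      have hub : ∑ s' : S, G.δ s a s' * reachBy G (σ.shift [(s,a)]) (τc s') (Tgt i) k [] s'
          ≤ c + ε := by
        calc ∑ s' : S, G.δ s a s' * reachBy G (σ.shift [(s,a)]) (τc s') (Tgt i) k [] s'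
            ≤ ∑ s' : S, G.δ s a s' * (u a s' i + ε) :=
              Finset.sum_le_sum fun s' _ =>
                mul_le_mul_of_nonneg_left (hτc s').le (G.δ_nonneg s a s')
          _ = c + ε := by
              simp only [hc]
              rw [Finset.sum_congr rfl fun s' (_ : s' ∈ Finset.univ) =>
                  show G.δ s a s' * (u a s' i + ε)
                    = G.δ s a s' * u a s' i + G.δ s a s' * ε from by ring,
                Finset.sum_add_distrib, ← Finset.sum_mul, G.δ_sum s a ha, one_mul]
      linarith

end AuxProof8

section AuxProof9
set_option linter.unusedSectionVars false
set_option maxHeartbeats 1000000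

variable {S A : Type} [Fintype S] [Fintype A] {n : ℕ}

/-- raw reach function on choice functions -/
def rb (G : SG S A) (σc τc : List (S × A) → S → A → ℝ) (T : Set S) :
    ℕ → List (S × A) → S → ℝ
  | 0, _, s => if s ∈ T then 1 else 0
  | k+1, h, s =>
    if s ∈ T then 1
    else ∑ a ∈ G.Av s,
      (if G.isMax s then σc h s a else τc h s a) *
        ∑ s' : S, G.δ s a s' * rb G σc τc T k (h ++ [(s, a)]) s'

lemma rb_eq (G : SG S A) (σ τ : Strategy G) (T : Set S) :
    ∀ (k : ℕ) (h : List (S × A)) (s : S),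
      rb G σ.choice τ.choice T k h s = reachBy G σ τ T k h s
  | 0, _, _ => rfl
  | (k+1), h, s => by
    show (if s ∈ T then (1:ℝ) else _) = (if s ∈ T then (1:ℝ) else _)
    split
    · rfl
    · apply Finset.sum_congr rfl
      intro a _
      congr 1
      apply Finset.sum_congr rfl
      intro s' _
      congr 1
      exact rb_eq G σ τ T k (h ++ [(s,a)]) s'

/-- set of valid strategy choice functions -/
def Val (G : SG S A) : Set (List (S × A) → S → A → ℝ) :=
  {c | (∀ h s a, 0 ≤ c h s a) ∧ (∀ h s a, a ∉ G.Av s → c h s a = 0) ∧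
    ∀ h s, ∑ a ∈ G.Av s, c h s a = 1}

def toStrat (G : SG S A) (c : List (S × A) → S → A → ℝ) (hc : c ∈ Val G) : Strategy G where
  choice := c
  nonneg := hc.1
  supp := hc.2.1
  sum_one := hc.2.2

/-- single-state simplex -/
def simplexAt (G : SG S A) (s : S) : Set (A → ℝ) :=
  {p | (∀ a, 0 ≤ p a) ∧ (∀ a, a ∉ G.Av s → p a = 0) ∧ ∑ a ∈ G.Av s, p a = 1}

lemma isClosed_simplexAt (G : SG S A) (s : S) : IsClosed (simplexAt G s) := by
  have : simplexAt G s
      = {p : A → ℝ | ∀ a, 0 ≤ p a} ∩ ({p : A → ℝ | ∀ a, a ∉ G.Av s → p a = 0}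
        ∩ {p : A → ℝ | ∑ a ∈ G.Av s, p a = 1}) := by
    ext p; simp [simplexAt, Set.mem_inter_iff]; try tauto
  rw [this]
  refine IsClosed.inter ?_ (IsClosed.inter ?_ ?_)
  · have : {p : A → ℝ | ∀ a, 0 ≤ p a} = ⋂ a, {p : A → ℝ | 0 ≤ p a} := by ext p; simp
    rw [this]
    exact isClosed_iInter fun a => isClosed_le continuous_const (continuous_apply a)
  · have : {p : A → ℝ | ∀ a, a ∉ G.Av s → p a = 0}
        = ⋂ a, {p : A → ℝ | a ∉ G.Av s → p a = 0} := by ext p; simp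
    rw [this]
    apply isClosed_iInter
    intro a
    by_cases ha : a ∈ G.Av s
    · simp [ha]
    · simp only [ha, not_false_iff, forall_true_left]
      exact isClosed_eq (continuous_apply a) continuous_const
  · exact isClosed_eq (continuous_finset_sum _ fun a _ => continuous_apply a) continuous_const

lemma isCompact_simplexAt (G : SG S A) (s : S) : IsCompact (simplexAt G s) := by
  apply IsCompact.of_isClosed_subset
    (isCompact_univ_pi fun _ : A => isCompact_Icc (a := (0:ℝ)) (b := 1))
    (isClosed_simplexAt G s)
  intro p hp
  rw [Set.mem_univ_pi]
  intro a
  refine ⟨hp.1 a, ?_⟩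
  by_cases ha : a ∈ G.Av s
  · calc p a ≤ ∑ b ∈ G.Av s, p b := Finset.single_le_sum (fun b _ => hp.1 b) ha
      _ = 1 := hp.2.2
  · rw [hp.2.1 a ha]; norm_num

lemma Val_eq (G : SG S A) : Val G = Set.univ.pi fun _ : List (S × A) =>
    Set.univ.pi fun s : S => simplexAt G s := by
  ext c
  simp only [Set.mem_pi, Set.mem_univ, forall_true_left, Val, simplexAt, Set.mem_setOf_eq]
  constructor
  · rintro ⟨h1, h2, h3⟩ h s
    exact ⟨h1 h s, h2 h s, h3 h s⟩
  · intro h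
    exact ⟨fun hh s => (h hh s).1, fun hh s => (h hh s).2.1, fun hh s => (h hh s).2.2⟩

lemma isClosed_Val (G : SG S A) : IsClosed (Val G) := by
  rw [Val_eq]
  exact isClosed_set_pi fun h _ => isClosed_set_pi fun s _ => isClosed_simplexAt G s

lemma isCompact_Val (G : SG S A) : IsCompact (Val G) := by
  rw [Val_eq]
  exact isCompact_univ_pi fun h => isCompact_univ_pi fun s => isCompact_simplexAt G s

lemma rb_cont (G : SG S A) (σc : List (S × A) → S → A → ℝ) (T : Set S) :
    ∀ (k : ℕ) (h : List (S × A)) (s : S),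
      Continuous fun c : List (S × A) → S → A → ℝ => rb G σc c T k h s
  | 0, h, s => by
    show Continuous fun _ : List (S × A) → S → A → ℝ => if s ∈ T then (1:ℝ) else 0
    exact continuous_const
  | (k+1), h, s => by
    show Continuous fun c : List (S × A) → S → A → ℝ => if s ∈ T then (1:ℝ) else ∑ a ∈ G.Av s,
      (if G.isMax s then σc h s a else c h s a) *
        ∑ s' : S, G.δ s a s' * rb G σc c T k (h ++ [(s, a)]) s'
    by_cases hsT : s ∈ T
    · simp only [if_pos hsT]; exact continuous_const
    · simp only [if_neg hsT]
      apply continuous_finset_sum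
      intro a _
      apply Continuous.mul
      · by_cases hM : G.isMax s
        · simp only [if_pos hM]; exact continuous_const
        · simp only [if_neg hM]
          exact (continuous_apply a).comp ((continuous_apply s).comp (continuous_apply h))
      · exact continuous_finset_sum _ fun s' _ =>
          Continuous.mul continuous_const (rb_cont G σc T k (h ++ [(s,a)]) s')

/-- Achievable vectors are approximable in finitely many steps. -/
lemma Ach_scaled (G : SG S A) (Tgt : Fin n → Set S) (s : S) {v : Vec n}
    (hv : v ∈ Ach G Tgt s) {ε : ℝ} (hε : 0 < ε) (hε1 : ε ≤ 1) :
    ∃ k : ℕ, (fun i => (1 - ε) * v i) ∈ AchBy G Tgt k s := by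
  classical
  obtain ⟨hvC, σ, hσ⟩ := hv
  have hcube : (fun i => (1 - ε) * v i) ∈ unitCube n := by
    intro i
    have h1 := hvC i
    have h2 : 0 ≤ (1 - ε) * v i := by nlinarith
    have h3 : (1 - ε) * v i ≤ 1 := by nlinarith
    exact ⟨h2, h3⟩
  by_contra hcon
  push_neg at hcon
  have hex : ∀ k, ∃ (τ : Strategy G) (i : Fin n),
      reachBy G σ τ (Tgt i) k [] s < (1 - ε) * v i := by
    intro k
    by_contra h2
    push_neg at h2
    exact hcon k ⟨hcube, σ, fun τ i => h2 τ i⟩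
  set I : Finset (Fin n) := Finset.univ.filter (fun i => 0 < v i) with hI
  set C : ℕ → Set (List (S × A) → S → A → ℝ) := fun k =>
    Val G ∩ {c | ∃ i ∈ I, rb G σ.choice c (Tgt i) k [] s ≤ (1 - ε) * v i} with hC
  have hCne : ∀ k, (C k).Nonempty := by
    intro k
    obtain ⟨τ, i, hτi⟩ := hex k
    have hτV : τ.choice ∈ Val G := ⟨τ.nonneg, τ.supp, τ.sum_one⟩
    have hvpos : 0 < v i := by
      by_contra hvn
      push_neg at hvn
      have h1 : (1 - ε) * v i ≤ 0 := mul_nonpos_of_nonneg_of_nonpos (by linarith) hvn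
      have h2 := reachBy_nonneg G σ τ (Tgt i) k [] s
      linarith
    refine ⟨τ.choice, hτV, i, ?_, ?_⟩
    · rw [hI]; exact Finset.mem_filter.mpr ⟨Finset.mem_univ i, hvpos⟩
    · rw [rb_eq G σ τ (Tgt i) k [] s]; exact hτi.le
  have hCclosed : ∀ k, IsClosed (C k) := by
    intro k
    apply IsClosed.inter (isClosed_Val G)
    have heq : {c | ∃ i ∈ I, rb G σ.choice c (Tgt i) k [] s ≤ (1 - ε) * v i}
        = ⋃ i ∈ (I : Set (Fin n)), {c | rb G σ.choice c (Tgt i) k [] s ≤ (1 - ε) * v i} := by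
      ext c; simp
    rw [heq]
    apply Set.Finite.isClosed_biUnion (I.finite_toSet)
    intro i _
    exact isClosed_le (rb_cont G σ.choice (Tgt i) k [] s) continuous_const
  have hCdec : ∀ k, C (k+1) ⊆ C k := by
    rintro k c ⟨hcV, i, hiI, hle⟩
    refine ⟨hcV, i, hiI, le_trans ?_ hle⟩
    have e1 : rb G σ.choice c (Tgt i) k [] s
        = reachBy G σ (toStrat G c hcV) (Tgt i) k [] s := rb_eq G σ (toStrat G c hcV) _ k [] s
    have e2 : rb G σ.choice c (Tgt i) (k+1) [] s
        = reachBy G σ (toStrat G c hcV) (Tgt i) (k+1) [] s :=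
      rb_eq G σ (toStrat G c hcV) _ (k+1) [] s
    rw [e1, e2]
    exact reachBy_mono G σ (toStrat G c hcV) (Tgt i) k [] s
  have hC0 : IsCompact (C 0) :=
    IsCompact.of_isClosed_subset (isCompact_Val G) (hCclosed 0) Set.inter_subset_left
  obtain ⟨c, hc⟩ := IsCompact.nonempty_iInter_of_sequence_nonempty_isCompact_isClosed
    C hCdec hCne hC0 hCclosed
  have hcV : c ∈ Val G := (Set.mem_iInter.mp hc 0).1
  set τs := toStrat G c hcV with hτs
  have hprop : ∀ k, ∃ i ∈ I, reachBy G σ τs (Tgt i) k [] s ≤ (1 - ε) * v i := by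
    intro k
    obtain ⟨-, i, hiI, hle⟩ := Set.mem_iInter.mp hc k
    refine ⟨i, hiI, ?_⟩
    rw [← rb_eq G σ τs (Tgt i) k [] s]
    exact hle
  have huniform : ∃ i ∈ I, ∀ k, reachBy G σ τs (Tgt i) k [] s ≤ (1 - ε) * v i := by
    by_contra hno
    push_neg at hno
    choose! K hK using hno
    obtain ⟨i, hiI, hle⟩ := hprop (I.sup K)
    have hKi := reachBy_monotone G σ τs (Tgt i) [] s (Finset.le_sup (f := K) hiI)
    have := hK i hiI
    linarith
  obtain ⟨i, hiI, hall⟩ := huniform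
  have hsup : probReach G σ τs s (Tgt i) ≤ (1 - ε) * v i := ciSup_le hall
  have hvle := hσ τs i
  have hvpos : 0 < v i := by
    simp only [hI, Finset.mem_filter] at hiI
    exact hiI.2
  nlinarith

end AuxProof9

section AuxProof10
set_option linter.unusedSectionVars false
set_option maxHeartbeats 1000000

variable {S A : Type} [Fintype S] [Fintype A] {n : ℕ}

lemma euclNorm_nonneg (x : Vec n) : 0 ≤ euclNorm x := Real.sqrt_nonneg _

lemma euclNorm_smul {c : ℝ} (hc : 0 ≤ c) (x : Vec n) :
    euclNorm (c • x) = c * euclNorm x := by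
  unfold euclNorm
  have h : ∑ i, (c • x) i ^ 2 = c ^ 2 * ∑ i, x i ^ 2 := by
    rw [Finset.mul_sum]
    apply Finset.sum_congr rfl
    intro i _
    simp only [Pi.smul_apply, smul_eq_mul]
    ring
  rw [h, Real.sqrt_mul (sq_nonneg c), Real.sqrt_sq hc]

lemma euclNorm_le_sqrt {x : Vec n} (hx : x ∈ Box1 n) : euclNorm x ≤ Real.sqrt n := by
  unfold euclNorm
  apply Real.sqrt_le_sqrt
  calc ∑ i, x i ^ 2 ≤ ∑ _i : Fin n, (1:ℝ) := by
        apply Finset.sum_le_sum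
        intro i _
        have h := mem_Box1.mp hx i
        nlinarith [h.1, h.2]
    _ = n := by simp

lemma smul_vec_eq (c : ℝ) (x : Vec n) : (fun i => c * x i) = c • x := rfl

lemma dirOf_smul {c : ℝ} (hc : 0 < c) (x : Vec n) : dirOf (c • x) = dirOf x := by
  ext z
  constructor
  · rintro ⟨l, hl, rfl⟩
    exact ⟨l * c, by positivity, by rw [smul_smul]⟩
  · rintro ⟨l, hl, rfl⟩
    refine ⟨l / c, by positivity, ?_⟩
    rw [smul_smul]
    congr 1
    field_simp

lemma ne_zero_of_dir {x : Vec n} {D : Set (Vec n)} (hD : D ∈ Dir n) (hx : dirOf x = D) :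
    x ≠ 0 := by
  obtain ⟨w, hw0, -, rfl⟩ := hD
  intro h0
  subst h0
  have hw : w ∈ dirOf w := ⟨1, one_pos, (one_smul ℝ w).symm⟩
  rw [← hx] at hw
  obtain ⟨l, -, hl⟩ := hw
  exact hw0 (by rw [hl]; simp)

lemma Llim_subset_Box1 (G : SG S A) (Tgt : Fin n → Set S) (s : S) :
    Llim G Tgt s ⊆ Box1 n := by
  intro x hx
  obtain ⟨X, ⟨k, rfl⟩, hk⟩ := hx
  exact (L_props G Tgt k s).1 hk

lemma Ach_subset_Box1 (G : SG S A) (Tgt : Fin n → Set S) (s : S) :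
    Ach G Tgt s ⊆ Box1 n := by
  intro x hx
  rw [Box1_eq_unitCube]
  exact hx.1

end AuxProof10

/-- Convergence from below: `L_inf(s)[d] = Ach(s)[d]`. -/
theorem mo_bvi_convergence_from_below (G : SG S A) (Tgt : Fin n → Set S) :
    ∀ s : S, ∀ D ∈ Dir n, evalIn (Llim G Tgt s) D = evalIn (Ach G Tgt s) D := by
  intro s D hD
  have hbddA : BddAbove (euclNorm '' {x | x ∈ Ach G Tgt s ∧ dirOf x = D}) := by
    refine ⟨Real.sqrt n, ?_⟩
    rintro x ⟨y, ⟨hyA, -⟩, rfl⟩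
    exact euclNorm_le_sqrt (Ach_subset_Box1 G Tgt s hyA)
  have hbddL : BddAbove (euclNorm '' {x | x ∈ Llim G Tgt s ∧ dirOf x = D}) := by
    refine ⟨Real.sqrt n, ?_⟩
    rintro x ⟨y, ⟨hyL, -⟩, rfl⟩
    exact euclNorm_le_sqrt (Llim_subset_Box1 G Tgt s hyL)
  have hA0 : (0:ℝ) ≤ evalIn (Ach G Tgt s) D :=
    Real.sSup_nonneg (by rintro x ⟨y, -, rfl⟩; exact euclNorm_nonneg y)
  have hL0 : (0:ℝ) ≤ evalIn (Llim G Tgt s) D :=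
    Real.sSup_nonneg (by rintro x ⟨y, -, rfl⟩; exact euclNorm_nonneg y)
  apply le_antisymm
  · -- `L_inf(s)[d] ≤ Ach(s)[d]`
    apply Real.sSup_le _ hA0
    rintro x ⟨y, ⟨hyL, hyD⟩, rfl⟩
    obtain ⟨X, ⟨k, rfl⟩, hk⟩ := hyL
    exact le_csSup hbddA ⟨y, ⟨L_subset_Ach G Tgt k s hk, hyD⟩, rfl⟩
  · -- `Ach(s)[d] ≤ L_inf(s)[d]`
    apply Real.sSup_le _ hL0
    rintro x ⟨y, ⟨hyA, hyD⟩, rfl⟩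
    -- approximate `y` from below along the same ray
    have hy0 : y ≠ 0 := ne_zero_of_dir hD hyD
    have hstep : ∀ ε : ℝ, 0 < ε → ε < 1 →
        (1 - ε) * euclNorm y ≤ evalIn (Llim G Tgt s) D := by
      intro ε hε hε1
      obtain ⟨k, hk⟩ := Ach_scaled G Tgt s hyA hε hε1.le
      have hmemL : (fun i => (1 - ε) * y i) ∈ Llim G Tgt s :=
        Set.mem_iUnion.mpr ⟨k + 1, AchBy_subset_L G Tgt k s hk⟩
      have hposc : (0:ℝ) < 1 - ε := by linarith
      have hdir : dirOf (fun i => (1 - ε) * y i) = D := by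
        rw [smul_vec_eq, dirOf_smul hposc, hyD]
      have hnorm : euclNorm (fun i => (1 - ε) * y i) = (1 - ε) * euclNorm y := by
        rw [smul_vec_eq]
        exact euclNorm_smul hposc.le y
      rw [← hnorm]
      exact le_csSup hbddL ⟨_, ⟨hmemL, hdir⟩, rfl⟩
    apply le_of_forall_pos_le_add
    intro η hη
    have hny : 0 ≤ euclNorm y := euclNorm_nonneg y
    rcases eq_or_lt_of_le hny with h0 | hpos
    · rw [← h0]; linarith
    · set ε : ℝ := min (η / euclNorm y) (1/2) with hε
      have hε0 : 0 < ε := by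
        rw [hε]
        apply lt_min
        · positivity
        · norm_num
      have hε1 : ε < 1 := by
        rw [hε]
        calc min (η / euclNorm y) (1/2) ≤ 1/2 := min_le_right _ _
          _ < 1 := by norm_num
      have := hstep ε hε0 hε1
      have hεy : ε * euclNorm y ≤ η := by
        have h1 : ε ≤ η / euclNorm y := by rw [hε]; exact min_le_left _ _
        calc ε * euclNorm y ≤ (η / euclNorm y) * euclNorm y :=
              mul_le_mul_of_nonneg_right h1 hny
          _ = η := by field_simp
      linarith

end
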